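/- arXiv:1911.06585 — 3 statements merged into one kernel-verified Lean document; each statement's English description precedes it below -/
import Mathlib

section
/- Let c ∈ ℕ and let the weighted system (N,R,wt,K) be c-closed. For every l ∈ ℕ, every nonterminal A ∈ N, and every B ⊆ (T_R)_A \ T_R^{(c)} with |B| = l the following holds: ⊕_{d ∈ (T_R^{(c)})_A} wt(d)_K = ⊕_{d ∈ (T_R^{(c)})_A ∪ B} wt(d)_K (both are finite ⊕-sums, since T_R^{(c)} is finite and B is finite). -/
open scoped Classical

/-- Trees over a ranked set `R` with arity function `ar`:
`RT.node r ts` is a tree whose root is labelled `r` and which has `ar r` children. -/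
inductive RT (R : Type) (ar : R → ℕ) : Type
  | node (r : R) (children : Fin (ar r) → RT R ar)

namespace RT

variable {R : Type} {ar : R → ℕ}

/-- The rule labelling the root of a tree. -/
def rootRule : RT R ar → R
  | node r _ => r

/-- The subtree at a position (`none` if the position is not a position of the tree). -/
def subAt : RT R ar → List ℕ → Option (RT R ar)
  | t, [] => some t
  | node r ts, i :: p => if h : i < ar r then subAt (ts ⟨i, h⟩) p else none

/-- Replace the subtree at a position by another tree. -/
def replaceAt : RT R ar → List ℕ → RT R ar → RT R ar
  | _, [], s => s
  | node r ts, i :: p, s => node r fun j => if j.1 = i then replaceAt (ts j) p s else ts j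

/-- The sequence of rule labels from the root to a position, inclusive. -/
def seqTo : RT R ar → List ℕ → Option (List R)
  | node r _, [] => some [r]
  | node r ts, i :: p => if h : i < ar r then (seqTo (ts ⟨i, h⟩) p).map (fun l => r :: l) else none

/-- `p` is a leaf position of `d`, i.e. a valid position with no child positions. -/
def LeafAt (d : RT R ar) (p : List ℕ) : Prop :=
  ∃ t, subAt d p = some t ∧ ar t.rootRule = 0

/-- The height of a tree: `0` on nullary nodes, otherwise `1` plus the maximum height
of the direct subtrees. -/
def height : RT R ar → ℕ
  | node _ ts => Finset.univ.sup fun i => height (ts i) + 1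

end RT

/-- The weight of a tree: evaluate it bottom-up, interpreting each rule `r` by the
operation `wt r`. -/
def wtval {K R : Type} {ar : R → ℕ} (wt : ∀ r : R, (Fin (ar r) → K) → K) : RT R ar → K
  | .node r ts => wt r fun i => wtval wt (ts i)

section Cyclicity

variable {R : Type} {ar : R → ℕ}

/-- A string over `R` is an elementary cycle if it has length `> 1`, its first and last
symbols coincide, and it becomes repetition-free after deleting its last (resp. first)
symbol. -/
def ElementaryCycle (w : List R) : Prop :=
  1 < w.length ∧ w.head? = w.getLast? ∧ w.dropLast.Nodup ∧ w.tail.Nodup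

/-- `ρ` is `(c,w)`-cyclic: `ρ = v₀ w v₁ ⋯ w v_c` (with `c` occurrences of the elementary
cycle `w`) where `w` is not an infix of any `vᵢ`. -/
def CWCyclic (c : ℕ) (w ρ : List R) : Prop :=
  ElementaryCycle w ∧
  ∃ v : ℕ → List R,
    ρ = v 0 ++ (((List.range c).map fun i => w ++ v (i + 1)).flatten) ∧
    ∀ i ≤ c, ¬ w <:+: v i

/-- `ρ` is `c`-cyclic: it is `(c,w)`-cyclic for some elementary cycle `w` and not
`(c',w')`-cyclic for any `c' > c` and elementary cycle `w'`. -/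
def CCyclic (c : ℕ) (ρ : List R) : Prop :=
  (∃ w, CWCyclic c w ρ) ∧ ∀ c', c < c' → ∀ w', ¬ CWCyclic c' w' ρ

/-- The leaf position `p` of `d` is `(c,w)`-cyclic. -/
def LeafCW (c : ℕ) (w : List R) (d : RT R ar) (p : List ℕ) : Prop :=
  RT.LeafAt d p ∧ ∃ ρ, RT.seqTo d p = some ρ ∧ CWCyclic c w ρ

/-- The leaf position `p` of `d` is `c`-cyclic. -/
def LeafC (c : ℕ) (d : RT R ar) (p : List ℕ) : Prop :=
  RT.LeafAt d p ∧ ∃ ρ, RT.seqTo d p = some ρ ∧ CCyclic c ρ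

/-- The tree `d` is `c`-cyclic: some leaf of `d` is `c`-cyclic and no leaf of `d` is
`c'`-cyclic for any `c' > c`. -/
def TreeC (c : ℕ) (d : RT R ar) : Prop :=
  (∃ p, LeafC c d p) ∧ ∀ c', c < c' → ∀ p, ¬ LeafC c' d p

/-- `d ⊢_w d'` : there are positions `p ≤ p'` of `d` whose connecting label sequence is
`w`, and `d'` is obtained by replacing the subtree at `p` by the subtree at `p'`.
(The position `p'` is `p ++ q`.) -/
def CutW (w : List R) (d d' : RT R ar) : Prop :=
  ∃ p q t s, RT.subAt d p = some t ∧ RT.subAt t q = some s ∧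
    RT.seqTo t q = some w ∧ d' = RT.replaceAt d p s

/-- `d ⊢ d'` : `d ⊢_w d'` for some elementary cycle `w`. -/
def Cut (d d' : RT R ar) : Prop := ∃ w, ElementaryCycle w ∧ CutW w d d'

/-- The set of `w`-cutout trees of `d`. -/
def cotreesW (w : List R) (d : RT R ar) : Set (RT R ar) := {d' | Relation.TransGen (CutW w) d d'}

/-- The set of cutout trees of `d`. -/
def cotrees (d : RT R ar) : Set (RT R ar) := {d' | Relation.TransGen Cut d d'}

end Cyclicity

section Rules

variable {N R : Type}

/-- Well-sorted trees over a rule system given by `lhs` and `rhs`: at each node labelled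
`r`, the `i`-th child is a well-sorted tree whose root label has left-hand side equal to
the `i`-th nonterminal of `rhs r`. -/
inductive WellSorted (lhs : R → N) (rhs : R → List N) :
    RT R (fun r => (rhs r).length) → Prop
  | node (r : R) (ts : Fin (rhs r).length → RT R fun r => (rhs r).length)
      (hsort : ∀ i, lhs (ts i).rootRule = (rhs r).get i)
      (hrec : ∀ i, WellSorted lhs rhs (ts i)) : WellSorted lhs rhs (RT.node r ts)

/-- `T_R` : the set of (well-sorted) trees over the rule system. -/
def TRset (lhs : R → N) (rhs : R → List N) : Set (RT R fun r => (rhs r).length) :=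
  {d | WellSorted lhs rhs d}

/-- `(T_R)_A` : the set of trees of sort `A`. -/
def TRA (lhs : R → N) (rhs : R → List N) (A : N) : Set (RT R fun r => (rhs r).length) :=
  {d | WellSorted lhs rhs d ∧ lhs d.rootRule = A}

/-- `T_R^{(c)}` : the set of trees that are `c'`-cyclic for some `c' ≤ c`. -/
def TRcset (lhs : R → N) (rhs : R → List N) (c : ℕ) : Set (RT R fun r => (rhs r).length) :=
  {d | WellSorted lhs rhs d ∧ ∃ c' ≤ c, TreeC c' d}

end Rules

/-- An infinitary sum operation on a commutative monoid `K`, turning it into a complete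
monoid: the sum of the empty family is `0`, the sum of a singleton family is its member,
the sum of a two-element family is the binary sum, and the partition law holds (every
partition of a countable index set `I` into sets indexed by `J` is given by the fibers
of a map `g : I → J`). -/
structure InfSum (K : Type) [AddCommMonoid K] where
  isum : ∀ {I : Type} [Countable I], (I → K) → K
  isum_empty : ∀ {I : Type} [Countable I] (f : I → K), IsEmpty I → isum f = 0
  isum_single : ∀ {I : Type} [Countable I] (f : I → K) (j : I), (∀ i, i = j) → isum f = f j
  isum_pair : ∀ {I : Type} [Countable I] (f : I → K) (j j' : I), j ≠ j' →
    (∀ i, i = j ∨ i = j') → isum f = f j + f j'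
  isum_partition : ∀ {I J : Type} [Countable I] [Countable J] (f : I → K) (g : I → J),
    isum f = isum fun j : J => isum fun i : {i : I // g i = j} => f i.1

section MMonoid

variable {K : Type} [AddCommMonoid K]

/-- A complete monoid is d-complete if, whenever all the partial sums `Σ_{i ≤ n} f i`
eventually equal `k`, the infinitary sum of the family equals `k`. -/
def InfSum.DComplete (S : InfSum K) : Prop :=
  ∀ (k : K) (f : ℕ → K),
    (∃ n₀ : ℕ, ∀ n, n₀ ≤ n → (∑ i ∈ Finset.range (n + 1), f i) = k) → S.isum f = k

/-- A complete monoid is completely idempotent if the infinitary sum of every constant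
family over a nonempty countable index set is that constant. -/
def InfSum.CompletelyIdempotent (S : InfSum K) : Prop :=
  ∀ (I : Type) [Countable I], Nonempty I → ∀ k : K, S.isum (fun _ : I => k) = k

/-- The family `Ω` of operation sets contains all the null (constantly `0`) operations. -/
def HasZeroOps (Ω : ∀ n : ℕ, Set ((Fin n → K) → K)) : Prop :=
  ∀ n : ℕ, (fun _ : Fin n → K => (0 : K)) ∈ Ω n

/-- Distributivity of an M-monoid: every operation in `Ω` distributes over `+` in each
argument, and `0` is absorbing for every operation in `Ω`. -/
def DistributiveOps (Ω : ∀ n : ℕ, Set ((Fin n → K) → K)) : Prop :=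
  ∀ n : ℕ, ∀ ω ∈ Ω n,
    (∀ (x : Fin n → K) (i : Fin n) (a b : K),
      ω (Function.update x i (a + b)) = ω (Function.update x i a) + ω (Function.update x i b)) ∧
    (∀ x : Fin n → K, (∃ i, x i = 0) → ω x = 0)

end MMonoid

/-- The weighted system `(N, R, wt, K)` is `c`-closed: for every well-sorted tree `d` and
elementary cycle `w` such that some leaf position of `d` is `(c+1,w)`-cyclic, the weight
of `d` is subsumed by the (finite) `⊕`-sum of the weights of the `w`-cutout trees of `d`. -/
def CClosed {K : Type} [AddCommMonoid K] {N R : Type} (lhs : R → N) (rhs : R → List N)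
    (wt : ∀ r : R, (Fin (rhs r).length → K) → K) (c : ℕ) : Prop :=
  ∀ d : RT R (fun r => (rhs r).length), WellSorted lhs rhs d →
    ∀ w : List R, ElementaryCycle w → (∃ p, LeafCW (c + 1) w d p) →
      (wtval wt d + ∑ᶠ d' ∈ cotreesW w d, wtval wt d') = ∑ᶠ d' ∈ cotreesW w d, wtval wt d'

/-! ### Auxiliary lemmas: cyclic decompositions of strings -/

section CycLemmas

variable {R : Type}

/-- `k` (possibly overlapping with the rest arbitrarily, but pairwise disjoint)
occurrences of `u` in `ρ`, in sequence. -/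
def Occs : ℕ → List R → List R → Prop
  | 0, _, _ => True
  | k+1, u, ρ => ∃ x y, ρ = x ++ u ++ y ∧ Occs k u y

/-- Alternative (recursive) description of the `(k,u)`-decompositions. -/
def Alt : ℕ → List R → List R → Prop
  | 0, u, ρ => ¬ u <:+: ρ
  | k+1, u, ρ => ∃ x y, ρ = x ++ u ++ y ∧ ¬ u <:+: x ∧ Alt k u y

theorem cw_iff_alt {c : ℕ} {u ρ : List R} :
    CWCyclic c u ρ ↔ ElementaryCycle u ∧ Alt c u ρ := by
  induction c generalizing ρ with
  | zero =>
    constructor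
    · rintro ⟨hel, v, hρ, hv⟩
      simp at hρ
      exact ⟨hel, by rw [Alt, hρ]; exact hv 0 le_rfl⟩
    · rintro ⟨hel, halt⟩
      exact ⟨hel, fun _ => ρ, by simp, fun i _ => halt⟩
  | succ c ih =>
    constructor
    · rintro ⟨hel, v, hρ, hv⟩
      rw [List.range_succ_eq_map] at hρ
      simp only [List.map_cons, List.flatten_cons, List.map_map] at hρ
      have hcomp : ((fun i => u ++ v (i + 1)) ∘ Nat.succ) = fun i => u ++ v (i + 2) := by
        funext i; rfl
      have hcw' : CWCyclic c u (v 1 ++ (((List.range c).map fun i => u ++ v (i + 2)).flatten)) := by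
        refine ⟨hel, fun i => v (i + 1), ?_, fun i hi => hv (i + 1) (by omega)⟩
        have he : ((List.range c).map fun i => u ++ v (i + 1 + 1)) = ((List.range c).map fun i => u ++ v (i + 2)) := by
          apply List.map_congr_left; intro i _; rfl
        rw [he]
      refine ⟨hel, v 0, v 1 ++ (((List.range c).map fun i => u ++ v (i + 2)).flatten), ?_, hv 0 (by omega), ?_⟩
      · rw [hρ, hcomp]; simp
      · exact ((ih).mp hcw').2
    · rintro ⟨hel, x, y, hρ, hx, halt⟩
      obtain ⟨-, v, hy, hv⟩ := (ih (ρ := y)).mpr ⟨hel, halt⟩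
      refine ⟨hel, fun i => match i with | 0 => x | i+1 => v i, ?_, ?_⟩
      · rw [hρ, hy, List.range_succ_eq_map]
        simp [Function.comp_def]
      · rintro (_|i) hi
        · exact hx
        · exact hv i (by omega)

theorem Occs.of_alt {k : ℕ} {u ρ : List R} (h : Alt k u ρ) : Occs k u ρ := by
  induction k generalizing ρ with
  | zero => trivial
  | succ k ih => obtain ⟨x, y, hρ, -, halt⟩ := h; exact ⟨x, y, hρ, ih halt⟩

theorem Occs.of_succ {k : ℕ} {u ρ : List R} (h : Occs (k+1) u ρ) : Occs k u ρ := by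
  induction k generalizing ρ with
  | zero => trivial
  | succ k ih => obtain ⟨x, y, hρ, hy⟩ := h; exact ⟨x, y, hρ, ih hy⟩

theorem Occs.prepend {k : ℕ} {u y : List R} (z : List R) (h : Occs k u y) :
    Occs k u (z ++ y) := by
  cases k with
  | zero => trivial
  | succ k => obtain ⟨x, y', hy, hy'⟩ := h; exact ⟨z ++ x, y', by rw [hy]; simp, hy'⟩

theorem Occs.le_length {k : ℕ} {u ρ : List R} (hu : u ≠ []) (h : Occs k u ρ) :
    k ≤ ρ.length := by
  induction k generalizing ρ with
  | zero => omega
  | succ k ih =>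
    obtain ⟨x, y, hρ, hy⟩ := h
    have := ih hy
    have hul : 1 ≤ u.length := List.length_pos_iff.mpr hu
    rw [hρ]; simp; omega

theorem Occs.tail {k : ℕ} {u : List R} {r : R} {l : List R} (hu : u ≠ [])
    (h : Occs (k+1) u (r :: l)) : Occs k u l := by
  obtain ⟨x, y, hρ, hy⟩ := h
  cases x with
  | nil =>
    simp at hρ
    cases u with
    | nil => exact absurd rfl hu
    | cons a u' =>
      simp at hρ
      rw [hρ.2]
      exact hy.prepend u'
  | cons a x' =>
    simp at hρ
    exact Occs.of_succ ⟨x', y, by rw [hρ.2, List.append_assoc], hy⟩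

/-- Greedy decomposition: a maximal `Alt`-decomposition exists. -/
theorem exists_alt {u : List R} (hu : u ≠ []) :
    ∀ ρ : List R, ∃ m, Alt m u ρ ∧ ∀ k, Occs k u ρ → k ≤ m := by
  suffices H : ∀ n (ρ : List R), ρ.length ≤ n → ∃ m, Alt m u ρ ∧ ∀ k, Occs k u ρ → k ≤ m by
    intro ρ; exact H ρ.length ρ le_rfl
  intro n
  induction n with
  | zero =>
    intro ρ hρ
    have hρnil : ρ = [] := List.length_eq_zero_iff.mp (by omega)
    refine ⟨0, ?_, ?_⟩
    · rw [Alt, hρnil]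
      intro hinf
      exact hu (List.eq_nil_of_infix_nil hinf)
    · rintro (_|k) h
      · rfl
      · obtain ⟨x, y, hxy, -⟩ := h
        exfalso
        apply hu
        rw [hρnil] at hxy
        have := congrArg List.length hxy
        simp at this
        exact List.length_eq_zero_iff.mp (by omega)
  | succ n ih =>
    intro ρ hρlen
    by_cases hinf : u <:+: ρ
    · have hSne : Set.Nonempty {m | u <+: ρ.drop m} := by
        obtain ⟨s, t, hst⟩ := hinf
        refine ⟨s.length, ?_⟩
        show u <+: ρ.drop s.length
        rw [← hst, List.append_assoc, List.drop_left]
        exact List.prefix_append u t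
      set n₀ := sInf {m | u <+: ρ.drop m} with hn₀
      have hn₀S : u <+: ρ.drop n₀ := Nat.sInf_mem hSne
      obtain ⟨y, hy⟩ := hn₀S
      have hn₀le : n₀ ≤ ρ.length := by
        by_contra hlt
        rw [List.drop_eq_nil_of_le (by omega)] at hy
        simp at hy; exact hu hy.1
      set x := ρ.take n₀ with hx
      have hxlen : x.length = n₀ := by simp [hx]; omega
      have hρeq : ρ = x ++ u ++ y := by
        rw [List.append_assoc, hy, hx, List.take_append_drop]
      have hylen : y.length < ρ.length := by
        have := congrArg List.length hρeq
        have hul : 1 ≤ u.length := List.length_pos_iff.mpr hu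
        simp at this; omega
      obtain ⟨m', halt', hmax'⟩ := ih y (by omega)
      have hxnoinf : ¬ u <:+: x := by
        rintro ⟨a, b, hab⟩
        have haS : a.length ∈ {m | u <+: ρ.drop m} := by
          show u <+: ρ.drop a.length
          have hre : ρ = a ++ (u ++ (b ++ u ++ y)) := by
            rw [hρeq, ← hab]; simp
          rw [hre, List.drop_left]
          exact List.prefix_append _ _
        have h1 : n₀ ≤ a.length := Nat.sInf_le haS
        have h2 : a.length < n₀ := by
          have := congrArg List.length hab
          have hul : 1 ≤ u.length := List.length_pos_iff.mpr hu
          simp at this; omega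
        omega
      refine ⟨m' + 1, ⟨x, y, hρeq, hxnoinf, halt'⟩, ?_⟩
      rintro (_|k) h
      · omega
      · obtain ⟨x₂, y₂, hρ₂, hy₂⟩ := h
        have hx₂S : x₂.length ∈ {m | u <+: ρ.drop m} := by
          show u <+: ρ.drop x₂.length
          rw [hρ₂, List.append_assoc, List.drop_left]
          exact List.prefix_append u y₂
        have hlen₂ : n₀ ≤ x₂.length := Nat.sInf_le hx₂S
        have hy₂eq : y₂ = ρ.drop (x₂.length + u.length) := by
          rw [hρ₂]
          rw [show x₂ ++ u ++ y₂ = (x₂ ++ u) ++ y₂ by simp,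
            show x₂.length + u.length = (x₂ ++ u).length by simp]
          rw [List.drop_left]
        have hyeq : y = ρ.drop (n₀ + u.length) := by
          rw [hρeq]
          rw [show x ++ u ++ y = (x ++ u) ++ y by simp,
            show n₀ + u.length = (x ++ u).length by simp [hxlen]]
          rw [List.drop_left]
        have hdd : y₂ = y.drop (x₂.length - n₀) := by
          rw [hy₂eq, hyeq, List.drop_drop]
          congr 1; omega
        have hysplit : y = y.take (x₂.length - n₀) ++ y₂ := by
          conv_lhs => rw [← List.take_append_drop (x₂.length - n₀) y]
          rw [← hdd]
        have hk : Occs k u y := by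
          rw [hysplit]; exact hy₂.prepend _
        have := hmax' k hk
        omega
    · refine ⟨0, hinf, ?_⟩
      rintro (_|k) h
      · omega
      · obtain ⟨x, y, hρ, -⟩ := h
        exact absurd ⟨x, y, hρ.symm⟩ hinf

theorem elementary_pair (r : R) : ElementaryCycle [r, r] := by
  refine ⟨by simp, by simp, by simp, by simp⟩

theorem ElementaryCycle.ne_nil {u : List R} (h : ElementaryCycle u) : u ≠ [] := by
  intro hn; rw [hn] at h; simp [ElementaryCycle] at h

theorem CWCyclic.le_length {k : ℕ} {u ρ : List R} (h : CWCyclic k u ρ) : k ≤ ρ.length :=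
  Occs.le_length (cw_iff_alt.mp h).1.ne_nil (Occs.of_alt (cw_iff_alt.mp h).2)

/-- The cyclic degree of a string: the maximal `k` for which it is `(k,u)`-cyclic
for some elementary cycle `u`. -/
noncomputable def degC (ρ : List R) : ℕ :=
  sSup {k | ∃ u, CWCyclic k u ρ}

theorem degC_bddAbove (ρ : List R) : BddAbove {k | ∃ u, CWCyclic k u ρ} :=
  ⟨ρ.length, fun _ ⟨_, hu⟩ => hu.le_length⟩

theorem degC_nonempty {ρ : List R} (hρ : ρ ≠ []) : {k | ∃ u, CWCyclic k u ρ}.Nonempty := by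
  obtain ⟨r, l, rfl⟩ := List.exists_cons_of_ne_nil hρ
  obtain ⟨m, halt, -⟩ := exists_alt (u := [r, r]) (by simp) (r :: l)
  exact ⟨m, [r, r], cw_iff_alt.mpr ⟨elementary_pair r, halt⟩⟩

theorem degC_mem {ρ : List R} (hρ : ρ ≠ []) : ∃ u, CWCyclic (degC ρ) u ρ :=
  Nat.sSup_mem (degC_nonempty hρ) (degC_bddAbove ρ)

theorem le_degC {k : ℕ} {u ρ : List R} (h : CWCyclic k u ρ) : k ≤ degC ρ :=
  le_csSup (degC_bddAbove ρ) ⟨u, h⟩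

theorem ccyclic_degC {ρ : List R} (hρ : ρ ≠ []) : CCyclic (degC ρ) ρ :=
  ⟨degC_mem hρ, fun c' hc' w' hcw => absurd (le_degC hcw) (by omega)⟩

end CycLemmas
/-! ### Auxiliary lemmas: trees -/

namespace RT

variable {R : Type} {ar : R → ℕ}

/-- The number of nodes of a tree. -/
def size : RT R ar → ℕ
  | node _ ts => 1 + ∑ i, size (ts i)

theorem size_node {r : R} {ts : Fin (ar r) → RT R ar} :
    size (node r ts) = 1 + ∑ i, size (ts i) := rfl

theorem subAt_nil (d : RT R ar) : subAt d [] = some d := by cases d; rfl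

theorem replaceAt_nil (d s : RT R ar) : replaceAt d [] s = s := by cases d; rfl

theorem size_pos (d : RT R ar) : 1 ≤ size d := by
  cases d with | node r ts => rw [size]; omega

theorem size_child_lt {r : R} {ts : Fin (ar r) → RT R ar} (i : Fin (ar r)) :
    size (ts i) < size (node r ts) := by
  rw [size_node]
  have : size (ts i) ≤ ∑ j, size (ts j) :=
    Finset.single_le_sum (f := fun j => size (ts j)) (fun j _ => Nat.zero_le _)
      (Finset.mem_univ i)
  omega

theorem size_subAt : ∀ {p : List ℕ} {d t : RT R ar}, subAt d p = some t → size t ≤ size d := by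
  intro p
  induction p with
  | nil => intro d t h; rw [subAt] at h; cases h; rfl
  | cons i p ih =>
    intro d t h
    cases d with | node r ts =>
    rw [subAt] at h
    split at h
    · exact le_trans (ih h) (le_of_lt (size_child_lt _))
    · cases h

theorem size_subAt_lt {p : List ℕ} {d t : RT R ar} (h : subAt d p = some t) (hp : p ≠ []) :
    size t < size d := by
  cases p with
  | nil => exact absurd rfl hp
  | cons i p =>
    cases d with | node r ts =>
    rw [subAt] at h
    split at h
    · exact lt_of_le_of_lt (size_subAt h) (size_child_lt _)
    · cases h

theorem size_replaceAt_lt : ∀ {p : List ℕ} {d t s : RT R ar},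
    subAt d p = some t → size s < size t → size (replaceAt d p s) < size d := by
  intro p
  induction p with
  | nil => intro d t s h hs; rw [subAt] at h; cases h; rw [replaceAt]; exact hs
  | cons i p ih =>
    intro d t s h hs
    cases d with | node r ts =>
    rw [subAt] at h
    split at h
    next hlt =>
      rw [replaceAt, size, size]
      have hmain : (∑ j, size (if j.1 = i then replaceAt (ts j) p s else ts j)) <
          ∑ j, size (ts j) := by
        apply Finset.sum_lt_sum
        · intro j _
          by_cases hj : j.1 = i
          · have : j = ⟨i, hlt⟩ := Fin.ext hj
            subst this
            rw [if_pos hj]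
            exact le_of_lt (ih h hs)
          · rw [if_neg hj]
        · refine ⟨⟨i, hlt⟩, Finset.mem_univ _, ?_⟩
          rw [if_pos rfl]
          exact ih h hs
      omega
    · cases h

theorem seqTo_length : ∀ {p : List ℕ} {d : RT R ar} {l : List R},
    seqTo d p = some l → l.length = p.length + 1 := by
  intro p
  induction p with
  | nil => intro d l h; cases d with | node r ts => rw [seqTo] at h; cases h; rfl
  | cons i p ih =>
    intro d l h
    cases d with | node r ts =>
    rw [seqTo] at h
    split at h
    · rw [Option.map_eq_some_iff] at h
      obtain ⟨l', hl', rfl⟩ := h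
      simp [ih hl']
    · cases h

theorem seqTo_head : ∀ {p : List ℕ} {d : RT R ar} {l : List R},
    seqTo d p = some l → l.head? = some d.rootRule := by
  intro p
  induction p with
  | nil => intro d l h; cases d with | node r ts => rw [seqTo] at h; cases h; rfl
  | cons i p ih =>
    intro d l h
    cases d with | node r ts =>
    rw [seqTo] at h
    split at h
    · rw [Option.map_eq_some_iff] at h
      obtain ⟨l', hl', rfl⟩ := h
      rfl
    · cases h

theorem seqTo_getLast : ∀ {p : List ℕ} {d t : RT R ar} {l : List R},
    seqTo d p = some l → subAt d p = some t → l.getLast? = some t.rootRule := by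
  intro p
  induction p with
  | nil =>
    intro d t l h h'
    cases d with | node r ts =>
    rw [seqTo] at h; rw [subAt] at h'
    cases h; cases h'; rfl
  | cons i p ih =>
    intro d t l h h'
    cases d with | node r ts =>
    rw [seqTo] at h; rw [subAt] at h'
    split at h
    next hlt =>
      rw [dif_pos hlt] at h'
      rw [Option.map_eq_some_iff] at h
      obtain ⟨l', hl', rfl⟩ := h
      have hne : l' ≠ [] := by
        intro hnil
        have := seqTo_length hl'
        rw [hnil] at this
        simp at this
      have hcons : (r :: l').getLast? = l'.getLast? := by
        cases l' with
        | nil => exact absurd rfl hne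
        | cons b l2 => exact List.getLast?_cons_cons
      rw [hcons]
      exact ih hl' h'
    · cases h

theorem subAt_of_seqTo : ∀ {p : List ℕ} {d : RT R ar} {l : List R},
    seqTo d p = some l → ∃ t, subAt d p = some t := by
  intro p
  induction p with
  | nil => intro d l h; exact ⟨d, RT.subAt_nil d⟩
  | cons i p ih =>
    intro d l h
    cases d with | node r ts =>
    rw [seqTo] at h
    split at h
    next hlt =>
      rw [Option.map_eq_some_iff] at h
      obtain ⟨l', hl', rfl⟩ := h
      obtain ⟨t, ht⟩ := ih hl'
      exact ⟨t, by rw [subAt, dif_pos hlt]; exact ht⟩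
    · cases h

theorem seqTo_of_subAt : ∀ {p : List ℕ} {d t : RT R ar},
    subAt d p = some t → ∃ l, seqTo d p = some l := by
  intro p
  induction p with
  | nil => intro d t h; cases d with | node r ts => exact ⟨[r], rfl⟩
  | cons i p ih =>
    intro d t h
    cases d with | node r ts =>
    rw [subAt] at h
    split at h
    next hlt =>
      obtain ⟨l, hl⟩ := ih h
      exact ⟨r :: l, by rw [seqTo, dif_pos hlt, hl]; rfl⟩
    · cases h

end RT

section WSLemmas

variable {N R : Type} {lhs : R → N} {rhs : R → List N}

theorem WellSorted.subAt : ∀ {p : List ℕ} {d t : RT R fun r => (rhs r).length},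
    WellSorted lhs rhs d → RT.subAt d p = some t → WellSorted lhs rhs t := by
  intro p
  induction p with
  | nil => intro d t hws h; rw [RT.subAt] at h; cases h; exact hws
  | cons i p ih =>
    intro d t hws h
    cases d with | node r ts =>
    rw [RT.subAt] at h
    split at h
    · cases hws with | node _ _ hsort hrec => exact ih (hrec _) h
    · cases h

theorem WellSorted.replaceAt : ∀ {p : List ℕ} {d t s : RT R fun r => (rhs r).length},
    WellSorted lhs rhs d → RT.subAt d p = some t → WellSorted lhs rhs s →
    s.rootRule = t.rootRule →
    WellSorted lhs rhs (RT.replaceAt d p s) ∧ (RT.replaceAt d p s).rootRule = d.rootRule := by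
  intro p
  induction p with
  | nil =>
    intro d t s hws h hs hroot
    rw [RT.subAt_nil] at h
    cases h
    rw [RT.replaceAt_nil]
    exact ⟨hs, hroot⟩
  | cons i p ih =>
    intro d t s hws h hs hroot
    cases d with | node r ts =>
    rw [RT.subAt] at h
    split at h
    next hlt =>
      cases hws with | node _ _ hsort hrec =>
      rw [RT.replaceAt]
      constructor
      · refine WellSorted.node r _ ?_ ?_
        · intro j
          by_cases hj : j.1 = i
          · have hje : j = ⟨i, hlt⟩ := Fin.ext hj
            subst hje
            rw [if_pos hj]
            rw [(ih (hrec _) h hs hroot).2]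
            exact hsort _
          · rw [if_neg hj]; exact hsort j
        · intro j
          by_cases hj : j.1 = i
          · have hje : j = ⟨i, hlt⟩ := Fin.ext hj
            subst hje
            rw [if_pos hj]
            exact (ih (hrec _) h hs hroot).1
          · rw [if_neg hj]; exact hrec j
      · rfl
    · cases h

theorem cut_step {w : List R} {d d' : RT R fun r => (rhs r).length}
    (hw : ElementaryCycle w) (hcut : CutW w d d') (hws : WellSorted lhs rhs d) :
    WellSorted lhs rhs d' ∧ d'.rootRule = d.rootRule ∧ RT.size d' < RT.size d := by
  obtain ⟨p, q, t, s, h1, h2, h3, h4⟩ := hcut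
  have hts : WellSorted lhs rhs t := hws.subAt h1
  have hss : WellSorted lhs rhs s := hts.subAt h2
  have hhead : w.head? = some t.rootRule := RT.seqTo_head h3
  have hlast : w.getLast? = some s.rootRule := RT.seqTo_getLast h3 h2
  have hroot : s.rootRule = t.rootRule := by
    have := hw.2.1
    rw [hhead, hlast] at this
    exact (Option.some_injective _ this).symm
  have hq : q ≠ [] := by
    intro hq
    have := RT.seqTo_length h3
    rw [hq] at this
    simp at this
    have := hw.1
    omega
  have hsize : RT.size s < RT.size t := RT.size_subAt_lt h2 hq
  obtain ⟨hws', hroot'⟩ := hws.replaceAt h1 hss hroot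
  subst h4
  exact ⟨hws', hroot', RT.size_replaceAt_lt h1 hsize⟩

theorem cotreesW_spec {w : List R} {d d' : RT R fun r => (rhs r).length}
    (hw : ElementaryCycle w) (hws : WellSorted lhs rhs d) (h : d' ∈ cotreesW w d) :
    WellSorted lhs rhs d' ∧ d'.rootRule = d.rootRule ∧ RT.size d' < RT.size d := by
  induction h with
  | single hc => exact cut_step hw hc hws
  | tail _ hc ih =>
    obtain ⟨hws1, hroot1, hsize1⟩ := ih
    obtain ⟨hws2, hroot2, hsize2⟩ := cut_step hw hc hws1
    exact ⟨hws2, by rw [hroot2, hroot1], by omega⟩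

end WSLemmas

namespace RT

variable {R : Type} {ar : R → ℕ}

theorem finite_size_le [Fintype R] : ∀ n : ℕ, {t : RT R ar | size t ≤ n}.Finite := by
  intro n
  induction n with
  | zero =>
    refine Set.Finite.subset (Set.finite_empty) ?_
    intro t ht
    have := size_pos t
    simp only [Set.mem_setOf_eq] at ht
    omega
  | succ n ih =>
    haveI : Finite {t : RT R ar // size t ≤ n} := ih.to_subtype
    set F : (Σ r : R, (Fin (ar r) → {t : RT R ar // size t ≤ n})) → RT R ar :=
      fun z => node z.1 (fun i => (z.2 i).1) with hF
    refine Set.Finite.subset (Set.finite_range F) ?_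
    rintro t ht
    cases t with | node r ts =>
    simp only [Set.mem_setOf_eq] at ht
    rw [size] at ht
    have hch : ∀ i, size (ts i) ≤ n := by
      intro i
      have : size (ts i) ≤ ∑ j, size (ts j) :=
        Finset.single_le_sum (f := fun j => size (ts j)) (fun j _ => Nat.zero_le _)
          (Finset.mem_univ i)
      omega
    exact ⟨⟨r, fun i => ⟨ts i, hch i⟩⟩, rfl⟩

/-- The list of all leaf positions. -/
def leaves : RT R ar → List (List ℕ)
  | node r ts =>
    if _ : ar r = 0 then [[]]
    else (List.finRange (ar r)).flatMap fun i => (leaves (ts i)).map (i.1 :: ·)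

theorem exists_leaf (d : RT R ar) : ∃ p, p ∈ leaves d := by
  induction d with
  | node r ts ih =>
    rw [leaves]
    split
    · exact ⟨[], by simp⟩
    next h =>
      obtain ⟨p, hp⟩ := ih ⟨0, Nat.pos_of_ne_zero h⟩
      refine ⟨(0 : ℕ) :: p, ?_⟩
      rw [List.mem_flatMap]
      exact ⟨⟨0, Nat.pos_of_ne_zero h⟩, List.mem_finRange _, List.mem_map.mpr ⟨p, hp, rfl⟩⟩

theorem leafAt_of_mem_leaves : ∀ {p : List ℕ} {d : RT R ar}, p ∈ leaves d → LeafAt d p := by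
  intro p
  induction p with
  | nil =>
    intro d h
    cases d with | node r ts =>
    rw [leaves] at h
    split at h
    next h0 => exact ⟨node r ts, rfl, h0⟩
    · rw [List.mem_flatMap] at h
      obtain ⟨j, -, hmem⟩ := h
      rw [List.mem_map] at hmem
      obtain ⟨q, -, hq⟩ := hmem
      cases hq
  | cons i p ih =>
    intro d h
    cases d with | node r ts =>
    rw [leaves] at h
    split at h
    · simp at h
    next h0 =>
      rw [List.mem_flatMap] at h
      obtain ⟨j, -, hmem⟩ := h
      rw [List.mem_map] at hmem
      obtain ⟨q, hq, heq⟩ := hmem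
      obtain ⟨hij, rfl⟩ : j.1 = i ∧ q = p := by
        injection heq with h1 h2; exact ⟨h1, h2⟩
      obtain ⟨t, hsub, har⟩ := ih hq
      refine ⟨t, ?_, har⟩
      rw [subAt, dif_pos (hij ▸ j.2)]
      have : (⟨i, hij ▸ j.2⟩ : Fin (ar r)) = j := Fin.ext hij.symm
      rw [this]
      exact hsub

theorem mem_leaves_of_leafAt : ∀ {p : List ℕ} {d : RT R ar}, LeafAt d p → p ∈ leaves d := by
  intro p
  induction p with
  | nil =>
    intro d h
    obtain ⟨t, hsub, har⟩ := h
    rw [subAt_nil] at hsub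
    have ht : t = d := by injection hsub with heq; exact heq.symm
    subst ht
    cases t with | node r ts =>
    have har' : ar r = 0 := har
    rw [leaves, dif_pos har']
    simp
  | cons i p ih =>
    intro d h
    obtain ⟨t, hsub, har⟩ := h
    cases d with | node r ts =>
    rw [subAt] at hsub
    split at hsub
    next hlt =>
      have h0 : ar r ≠ 0 := by omega
      rw [leaves, dif_neg h0, List.mem_flatMap]
      exact ⟨⟨i, hlt⟩, List.mem_finRange _, List.mem_map.mpr ⟨p, ih ⟨t, hsub, har⟩, rfl⟩⟩
    · cases hsub

end RT

theorem exists_max_image {α : Type*} (l : List α) (f : α → ℕ) (h : l ≠ []) :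
    ∃ a ∈ l, ∀ b ∈ l, f b ≤ f a := by
  induction l with
  | nil => exact absurd rfl h
  | cons x l ih =>
    cases l with
    | nil => exact ⟨x, by simp⟩
    | cons y l' =>
      obtain ⟨m, hm, hmax⟩ := ih (by simp)
      rcases le_total (f x) (f m) with hle | hle
      · refine ⟨m, List.mem_cons_of_mem _ hm, ?_⟩
        intro b hb
        rcases List.mem_cons.mp hb with rfl | hb
        · exact hle
        · exact hmax _ hb
      · refine ⟨x, List.mem_cons_self, ?_⟩
        intro b hb
        rcases List.mem_cons.mp hb with rfl | hb
        · exact le_rfl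
        · exact le_trans (hmax _ hb) hle
/-! ### Auxiliary lemmas: absorption algebra in a commutative monoid -/

section Absorb

variable {α K : Type*} [AddCommMonoid K] {f : α → K} {S : K}

theorem absorb_finset (s : Finset α) (h : ∀ a ∈ s, f a + S = S) :
    (∑ a ∈ s, f a) + S = S := by
  classical
  induction s using Finset.induction_on with
  | empty => simp
  | @insert a s ha ih =>
    rw [Finset.sum_insert ha, add_assoc, ih (fun b hb => h b (Finset.mem_insert_of_mem hb))]
    exact h a (Finset.mem_insert_self a s)

theorem absorb_finsum {s : Set α} (hs : s.Finite) (h : ∀ a ∈ s, f a + S = S) :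
    (∑ᶠ a ∈ s, f a) + S = S := by
  rw [← hs.coe_toFinset, finsum_mem_coe_finset]
  exact absorb_finset _ (fun a ha => h a (hs.mem_toFinset.mp ha))

theorem finsum_mem_split {t s : Set α} (hts : t ⊆ s) (ht : t.Finite)
    (hs : (s ∩ Function.support f).Finite) :
    ∑ᶠ a ∈ s, f a = (∑ᶠ a ∈ t, f a) + ∑ᶠ a ∈ s \ t, f a := by
  rw [← finsum_mem_union' Set.disjoint_sdiff_right
    (ht.inter_of_left _) (hs.subset (fun x hx => ⟨hx.1.1, hx.2⟩)),
    Set.union_diff_cancel hts]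

theorem absorb_subset {t s : Set α} (hts : t ⊆ s) (ht : t.Finite)
    (hs : (s ∩ Function.support f).Finite) {x : K}
    (h : x + ∑ᶠ a ∈ t, f a = ∑ᶠ a ∈ t, f a) :
    x + ∑ᶠ a ∈ s, f a = ∑ᶠ a ∈ s, f a := by
  rw [finsum_mem_split hts ht hs, ← add_assoc, h]

theorem dist_sum {n : ℕ} {ω : (Fin n → K) → K}
    (hd : ∀ (x : Fin n → K) (i : Fin n) (a b : K),
      ω (Function.update x i (a + b)) = ω (Function.update x i a) + ω (Function.update x i b))
    (hz : ∀ x : Fin n → K, (∃ i, x i = 0) → ω x = 0)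
    (x : Fin n → K) (i : Fin n) {β : Type*} (s : Finset β) (g : β → K) :
    ω (Function.update x i (∑ b ∈ s, g b)) = ∑ b ∈ s, ω (Function.update x i (g b)) := by
  classical
  induction s using Finset.induction_on with
  | empty =>
    rw [Finset.sum_empty, Finset.sum_empty]
    exact hz _ ⟨i, by simp⟩
  | insert _ _ ha ih =>
    rw [Finset.sum_insert ha, Finset.sum_insert ha, hd, ih]

end Absorb

/-! ### Every tree outside `T_R^{(c)}` has a leaf of high cyclic degree -/

theorem bad_leaf {N R : Type} {lhs : R → N} {rhs : R → List N} {c : ℕ}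
    {d : RT R fun r => (rhs r).length} (hws : WellSorted lhs rhs d)
    (hbad : d ∉ TRcset lhs rhs c) :
    ∃ p ρ, RT.LeafAt d p ∧ RT.seqTo d p = some ρ ∧ c + 1 ≤ degC ρ := by
  by_contra hcon
  push_neg at hcon
  -- pick a leaf of maximal degree
  obtain ⟨p₀, hp₀⟩ := RT.exists_leaf d
  have hlne : RT.leaves d ≠ [] := List.ne_nil_of_mem hp₀
  obtain ⟨pm, hpm, hmax⟩ :=
    exists_max_image (RT.leaves d) (fun p => degC ((RT.seqTo d p).getD [])) hlne
  have hleafm : RT.LeafAt d pm := RT.leafAt_of_mem_leaves hpm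
  obtain ⟨tm, hsubm, harm⟩ := hleafm
  obtain ⟨ρm, hρm⟩ := RT.seqTo_of_subAt hsubm
  have hρmne : ρm ≠ [] := by
    intro h
    have := RT.seqTo_length hρm
    rw [h] at this
    simp at this
  apply hbad
  refine ⟨hws, degC ρm, ?_, ⟨pm, ⟨tm, hsubm, harm⟩, ρm, hρm, ccyclic_degC hρmne⟩, ?_⟩
  · have := hcon pm ρm ⟨tm, hsubm, harm⟩ hρm
    omega
  · rintro c'' hgt p ⟨hleaf, ρ, hseq, hcyc⟩
    obtain ⟨⟨w, hcw⟩, -⟩ := hcyc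
    have h1 : c'' ≤ degC ρ := le_degC hcw
    have h2 : degC ρ ≤ degC ρm := by
      have := hmax p (RT.mem_leaves_of_leafAt hleaf)
      simpa [hseq, hρm] using this
    omega
/-! ### The main absorption lemma -/

theorem absorbing_set {N R K : Type} [Fintype R] [AddCommMonoid K]
    {Ω : ∀ n : ℕ, Set ((Fin n → K) → K)} (hΩd : DistributiveOps Ω)
    {lhs : R → N} {rhs : R → List N}
    {wt : ∀ r : R, (Fin (rhs r).length → K) → K} (hwt : ∀ r : R, wt r ∈ Ω (rhs r).length)
    {c : ℕ} (hclosed : CClosed lhs rhs wt c) :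
    ∀ (n : ℕ) (d : RT R fun r => (rhs r).length), RT.size d ≤ n →
      WellSorted lhs rhs d → d ∉ TRcset lhs rhs c →
      ∃ G : Set (RT R fun r => (rhs r).length), G.Finite ∧
        G ⊆ TRcset lhs rhs c ∩ TRA lhs rhs (lhs d.rootRule) ∧
        (∀ e ∈ G, RT.size e < RT.size d) ∧
        wtval wt d + ∑ᶠ e ∈ G, wtval wt e = ∑ᶠ e ∈ G, wtval wt e := by
  intro n
  induction n with
  | zero =>
    intro d hn
    have := RT.size_pos d
    omega
  | succ n ih =>
    intro d hsize hws hbad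
    by_cases hCA : ∃ p w ρ, RT.LeafAt d p ∧ RT.seqTo d p = some ρ ∧ CWCyclic (c + 1) w ρ
    · -- Case 1 : `d` has a `(c+1,w)`-cyclic leaf, use `c`-closedness.
      obtain ⟨p, w, ρ, hleaf, hseq, hcw⟩ := hCA
      have hw : ElementaryCycle w := hcw.1
      have hcl := hclosed d hws w hw ⟨p, hleaf, ρ, hseq, hcw⟩
      have hcotspec : ∀ e ∈ cotreesW w d,
          WellSorted lhs rhs e ∧ e.rootRule = d.rootRule ∧ RT.size e < RT.size d :=
        fun e he => cotreesW_spec hw hws he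
      have hcotfin : (cotreesW w d).Finite :=
        (RT.finite_size_le (RT.size d)).subset (fun e he => le_of_lt (hcotspec e he).2.2)
      set FT := cotreesW w d ∩ TRcset lhs rhs c with hFT
      set FB := cotreesW w d \ TRcset lhs rhs c with hFB
      have hFTfin : FT.Finite := hcotfin.inter_of_left _
      have hFBfin : FB.Finite := hcotfin.diff
      have H : ∀ e : RT R fun r => (rhs r).length, ∃ G : Set (RT R fun r => (rhs r).length),
          e ∈ FB → (G.Finite ∧ G ⊆ TRcset lhs rhs c ∩ TRA lhs rhs (lhs e.rootRule) ∧
            (∀ x ∈ G, RT.size x < RT.size e) ∧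
            wtval wt e + ∑ᶠ x ∈ G, wtval wt x = ∑ᶠ x ∈ G, wtval wt x) := by
        intro e
        by_cases he : e ∈ FB
        · obtain ⟨G, hG⟩ := ih e (by have := (hcotspec e he.1).2.2; omega)
            (hcotspec e he.1).1 he.2
          exact ⟨G, fun _ => hG⟩
        · exact ⟨∅, fun h => absurd h he⟩
      choose Gf hGf using H
      set G := FT ∪ ⋃ e ∈ FB, Gf e with hGdef
      have hGfin : G.Finite :=
        hFTfin.union (hFBfin.biUnion (fun e he => ((hGf e) he).1))
      refine ⟨G, hGfin, ?_, ?_, ?_⟩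
      · rintro x (hx | hx)
        · exact ⟨hx.2, (hcotspec x hx.1).1, by rw [(hcotspec x hx.1).2.1]⟩
        · simp only [Set.mem_iUnion] at hx
          obtain ⟨e, he, hxe⟩ := hx
          have := ((hGf e) he).2.1 hxe
          rwa [(hcotspec e he.1).2.1] at this
      · rintro x (hx | hx)
        · exact (hcotspec x hx.1).2.2
        · simp only [Set.mem_iUnion] at hx
          obtain ⟨e, he, hxe⟩ := hx
          have h1 := ((hGf e) he).2.2.1 x hxe
          have h2 := (hcotspec e he.1).2.2
          omega
      · -- the absorption computation
        set f : (RT R fun r => (rhs r).length) → K := wtval wt with hf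
        set SG := ∑ᶠ x ∈ G, f x with hSG
        have hGsupp : (G ∩ Function.support f).Finite := hGfin.inter_of_left _
        have habs_e : ∀ e ∈ FB, f e + SG = SG := by
          intro e he
          exact absorb_subset (fun x hx => Or.inr (Set.mem_biUnion he hx))
            ((hGf e) he).1 hGsupp ((hGf e) he).2.2.2
        have hFBsum : (∑ᶠ e ∈ FB, f e) + SG = SG := absorb_finsum hFBfin habs_e
        have h5 : ∑ᶠ e ∈ cotreesW w d, f e = (∑ᶠ e ∈ FT, f e) + ∑ᶠ e ∈ FB, f e := by
          rw [← finsum_mem_union' (Set.disjoint_left.mpr fun x hx hx' => hx'.2 hx.2)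
            (hFTfin.inter_of_left _) (hFBfin.inter_of_left _)]
          rw [Set.inter_union_diff]
        have h6 : SG = (∑ᶠ e ∈ FT, f e) + ∑ᶠ e ∈ G \ FT, f e :=
          finsum_mem_split Set.subset_union_left hFTfin hGsupp
        calc f d + SG = f d + ((∑ᶠ e ∈ FB, f e) + SG) := by rw [hFBsum]
          _ = f d + ((∑ᶠ e ∈ FB, f e) + ((∑ᶠ e ∈ FT, f e) + ∑ᶠ e ∈ G \ FT, f e)) := by
              rw [← h6]
          _ = (f d + ((∑ᶠ e ∈ FT, f e) + ∑ᶠ e ∈ FB, f e)) + ∑ᶠ e ∈ G \ FT, f e := by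
              abel
          _ = (f d + ∑ᶠ e ∈ cotreesW w d, f e) + ∑ᶠ e ∈ G \ FT, f e := by rw [h5]
          _ = (∑ᶠ e ∈ cotreesW w d, f e) + ∑ᶠ e ∈ G \ FT, f e := by rw [hcl]
          _ = (∑ᶠ e ∈ FB, f e) + ((∑ᶠ e ∈ FT, f e) + ∑ᶠ e ∈ G \ FT, f e) := by
              rw [h5]; abel
          _ = (∑ᶠ e ∈ FB, f e) + SG := by rw [← h6]
          _ = SG := hFBsum
    · -- Case 2 : all (c+1)-bad leaves have degree ≥ c+2; push into a child.
      obtain ⟨p, ρ, hleaf, hseq, hdeg⟩ := bad_leaf hws hbad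
      have hρne : ρ ≠ [] := by
        intro h
        have := RT.seqTo_length hseq
        rw [h] at this
        simp at this
      obtain ⟨u, hcwd⟩ := degC_mem hρne
      have hel : ElementaryCycle u := hcwd.1
      have hdeg2 : c + 2 ≤ degC ρ := by
        rcases Nat.lt_or_ge (degC ρ) (c + 2) with h | h
        · have hde : degC ρ = c + 1 := by omega
          exact absurd ⟨p, u, ρ, hleaf, hseq, hde ▸ hcwd⟩ hCA
        · exact h
      have hocc : Occs (degC ρ) u ρ := Occs.of_alt (cw_iff_alt.mp hcwd).2
      cases p with
      | nil =>
        have hlen : ρ.length = 1 := by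
          have := RT.seqTo_length hseq
          simpa using this
        have := hocc.le_length hel.ne_nil
        omega
      | cons j p' =>
      cases d with | node r ts =>
      by_cases hj : j < (rhs r).length
      swap
      · rw [RT.seqTo, dif_neg hj] at hseq
        cases hseq
      rw [RT.seqTo, dif_pos hj] at hseq
      rw [Option.map_eq_some_iff] at hseq
      obtain ⟨ρ', hseq', hρeq⟩ := hseq
      obtain ⟨t0, hsub0, har0⟩ := hleaf
      rw [RT.subAt, dif_pos hj] at hsub0
      have hleaf' : RT.LeafAt (ts ⟨j, hj⟩) p' := ⟨t0, hsub0, har0⟩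
      obtain ⟨k, hk⟩ : ∃ k, degC ρ = k + 1 := ⟨degC ρ - 1, by omega⟩
      have hocc' : Occs k u ρ' := by
        have h1 : Occs (k + 1) u (r :: ρ') := by
          rw [hρeq]
          exact hk ▸ hocc
        exact Occs.tail hel.ne_nil h1
      obtain ⟨m, halt, hmax⟩ := exists_alt hel.ne_nil ρ'
      have hmk : k ≤ m := hmax k hocc'
      have hcw' : CWCyclic m u ρ' := cw_iff_alt.mpr ⟨hel, halt⟩
      have hdegρ' : c + 1 ≤ degC ρ' := le_trans (by omega) (le_degC hcw')
      have hρ'ne : ρ' ≠ [] := by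
        intro h
        subst h
        have := hocc'.le_length hel.ne_nil
        simp at this
        omega
      cases hws with | node _ _ hsort hrec =>
      set j' : Fin (rhs r).length := ⟨j, hj⟩ with hj'
      set d0 : RT R fun r => (rhs r).length := RT.node r ts with hd0
      have hchildws : WellSorted lhs rhs (ts j') := hrec j'
      have hchildbad : ts j' ∉ TRcset lhs rhs c := by
        rintro ⟨-, c', hc'le, -, hno⟩
        exact hno (degC ρ') (by omega) p' ⟨hleaf', ρ', hseq', ccyclic_degC hρ'ne⟩
      have hchildlt := @RT.size_child_lt R (fun r => (rhs r).length) r ts j'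
      rw [← hd0] at hchildlt
      obtain ⟨Gj, hGjfin, hGjsub, hGjsize, hGjabs⟩ :=
        ih (ts j') (by omega) hchildws hchildbad
      set dE : (RT R fun r => (rhs r).length) → RT R fun r => (rhs r).length :=
        fun e => RT.node r (Function.update ts j' e) with hdE
      have hEws : ∀ e ∈ Gj, WellSorted lhs rhs (dE e) := by
        intro e he
        obtain ⟨heT, hews, heroot⟩ :
            e ∈ TRcset lhs rhs c ∧ WellSorted lhs rhs e ∧ lhs e.rootRule = lhs (ts j').rootRule :=
          ⟨(hGjsub he).1, (hGjsub he).2.1, (hGjsub he).2.2⟩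
        refine WellSorted.node r _ ?_ ?_
        · intro i
          by_cases hij : i = j'
          · rw [hij, Function.update_self, heroot]
            exact hsort j'
          · rw [Function.update_of_ne hij]
            exact hsort i
        · intro i
          by_cases hij : i = j'
          · rw [hij, Function.update_self]
            exact hews
          · rw [Function.update_of_ne hij]
            exact hrec i
      have hEsize : ∀ e ∈ Gj, RT.size (dE e) < RT.size d0 := by
        intro e he
        have h1 : RT.size e < RT.size (ts j') := hGjsize e he
        rw [hdE, hd0]
        rw [RT.size_node, RT.size_node]
        have h2a : (fun i => RT.size (Function.update ts j' e i))
            = Function.update (fun i => RT.size (ts i)) j' (RT.size e) := by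
          funext i
          exact Function.apply_update (fun _ t => RT.size t) ts j' e i
        have h2 : ∑ i, RT.size (Function.update ts j' e i)
            = RT.size e + ∑ i ∈ Finset.univ.erase j', RT.size (ts i) := by
          calc ∑ i, RT.size (Function.update ts j' e i)
              = ∑ i, Function.update (fun i => RT.size (ts i)) j' (RT.size e) i := by rw [h2a]
            _ = RT.size e + ∑ i ∈ Finset.univ \ {j'}, RT.size (ts i) :=
                Finset.sum_update_of_mem (Finset.mem_univ j') _ _
            _ = RT.size e + ∑ i ∈ Finset.univ.erase j', RT.size (ts i) := by
                rw [Finset.erase_eq]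
        have h3 : RT.size (ts j') + ∑ i ∈ Finset.univ.erase j', RT.size (ts i)
            = ∑ i, RT.size (ts i) :=
          Finset.add_sum_erase _ (fun i => RT.size (ts i)) (Finset.mem_univ j')
        omega
      obtain ⟨hdist, hzero⟩ := hΩd _ (wt r) (hwt r)
      set X : Fin (rhs r).length → K := fun i => wtval wt (ts i) with hX
      have hwtE : ∀ e, wtval wt (dE e) = wt r (Function.update X j' (wtval wt e)) := by
        intro e
        show wt r (fun i => wtval wt (Function.update ts j' e i)) = _
        congr 1
        funext i
        exact Function.apply_update (fun _ t => wtval wt t) ts j' e i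
      set GjF := hGjfin.toFinset with hGjF
      have hsumGj : ∑ᶠ e ∈ Gj, wtval wt e = ∑ e ∈ GjF, wtval wt e := by
        rw [← finsum_mem_coe_finset, hGjfin.coe_toFinset]
      have hkey : wtval wt d0 + ∑ e ∈ GjF, wtval wt (dE e)
          = ∑ e ∈ GjF, wtval wt (dE e) := by
        have e1 : wtval wt d0 = wt r (Function.update X j' (X j')) := by
          rw [Function.update_eq_self, hd0]
          rfl
        have e2 : ∑ e ∈ GjF, wtval wt (dE e)
            = wt r (Function.update X j' (∑ e ∈ GjF, wtval wt e)) := by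
          rw [dist_sum hdist hzero]
          exact Finset.sum_congr rfl fun e _ => hwtE e
        have e3 : X j' + ∑ e ∈ GjF, wtval wt e = ∑ e ∈ GjF, wtval wt e := by
          rw [← hsumGj]
          exact hGjabs
        rw [e1, e2, ← hdist, e3]
      -- split `Gj` into the parts with good/bad substituted trees
      set P := {e : RT R fun r => (rhs r).length | dE e ∈ TRcset lhs rhs c} with hP
      set Hg := Gj ∩ P with hHg
      set Hb := Gj \ P with hHb
      have hHgfin : Hg.Finite := hGjfin.inter_of_left _
      have hHbfin : Hb.Finite := hGjfin.diff
      have H : ∀ e : RT R fun r => (rhs r).length, ∃ G : Set (RT R fun r => (rhs r).length),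
          e ∈ Hb → (G.Finite ∧
            G ⊆ TRcset lhs rhs c ∩ TRA lhs rhs (lhs (dE e).rootRule) ∧
            (∀ x ∈ G, RT.size x < RT.size (dE e)) ∧
            wtval wt (dE e) + ∑ᶠ x ∈ G, wtval wt x = ∑ᶠ x ∈ G, wtval wt x) := by
        intro e
        by_cases he : e ∈ Hb
        · obtain ⟨G, hG⟩ := ih (dE e) (by have := hEsize e he.1; omega)
            (hEws e he.1) he.2
          exact ⟨G, fun _ => hG⟩
        · exact ⟨∅, fun h => absurd h he⟩
      choose Gf hGf using H
      set G := (dE '' Hg) ∪ ⋃ e ∈ Hb, Gf e with hGdef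
      have hGfin : G.Finite :=
        (hHgfin.image _).union (hHbfin.biUnion (fun e he => ((hGf e) he).1))
      refine ⟨G, hGfin, ?_, ?_, ?_⟩
      · rintro x (hx | hx)
        · obtain ⟨e, he, rfl⟩ := hx
          exact ⟨he.2, hEws e he.1, rfl⟩
        · simp only [Set.mem_iUnion] at hx
          obtain ⟨e, he, hxe⟩ := hx
          exact ((hGf e) he).2.1 hxe
      · rintro x (hx | hx)
        · obtain ⟨e, he, rfl⟩ := hx
          exact hEsize e he.1
        · simp only [Set.mem_iUnion] at hx
          obtain ⟨e, he, hxe⟩ := hx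
          have h1 := ((hGf e) he).2.2.1 x hxe
          have h2 := hEsize e he.1
          omega
      · -- absorption computation
        set f : (RT R fun r => (rhs r).length) → K := wtval wt with hf
        set SG := ∑ᶠ x ∈ G, f x with hSG
        have hGsupp : (G ∩ Function.support f).Finite := hGfin.inter_of_left _
        have habs_e : ∀ e ∈ Hb, f (dE e) + SG = SG := by
          intro e he
          exact absorb_subset (fun x hx => Or.inr (Set.mem_biUnion he hx))
            ((hGf e) he).1 hGsupp ((hGf e) he).2.2.2
        have hHbsum : (∑ᶠ e ∈ Hb, f (dE e)) + SG = SG :=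
          absorb_finsum hHbfin habs_e
        have hinj : Set.InjOn dE Hg := by
          intro e1 _ e2 _ heq
          have : Function.update ts j' e1 = Function.update ts j' e2 := by
            injection heq with h1 h2
          have := congrFun this j'
          rwa [Function.update_self, Function.update_self] at this
        have himg : ∑ᶠ x ∈ dE '' Hg, f x = ∑ᶠ e ∈ Hg, f (dE e) := finsum_mem_image hinj
        have hsplitGj : ∑ᶠ e ∈ Gj, f (dE e) = (∑ᶠ e ∈ Hg, f (dE e)) + ∑ᶠ e ∈ Hb, f (dE e) := by
          rw [← finsum_mem_union' (Set.disjoint_left.mpr fun x hx hx' => hx'.2 hx.2)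
            (hHgfin.inter_of_left _) (hHbfin.inter_of_left _)]
          rw [Set.inter_union_diff]
        have hsumGj2 : ∑ᶠ e ∈ Gj, f (dE e) = ∑ e ∈ GjF, f (dE e) := by
          rw [← finsum_mem_coe_finset, hGjfin.coe_toFinset]
        have h6 : SG = (∑ᶠ x ∈ dE '' Hg, f x) + ∑ᶠ x ∈ G \ (dE '' Hg), f x :=
          finsum_mem_split Set.subset_union_left (hHgfin.image _) hGsupp
        have hkey' : f d0 + ∑ᶠ e ∈ Gj, f (dE e) = ∑ᶠ e ∈ Gj, f (dE e) := by
          rw [hsumGj2]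
          exact hkey
        calc f d0 + SG
            = f d0 + ((∑ᶠ e ∈ Hb, f (dE e)) + SG) := by rw [hHbsum]
          _ = f d0 + ((∑ᶠ e ∈ Hb, f (dE e))
              + ((∑ᶠ x ∈ dE '' Hg, f x) + ∑ᶠ x ∈ G \ (dE '' Hg), f x)) := by rw [← h6]
          _ = (f d0 + ((∑ᶠ e ∈ Hg, f (dE e)) + ∑ᶠ e ∈ Hb, f (dE e)))
              + ∑ᶠ x ∈ G \ (dE '' Hg), f x := by rw [himg]; abel
          _ = (f d0 + ∑ᶠ e ∈ Gj, f (dE e)) + ∑ᶠ x ∈ G \ (dE '' Hg), f x := by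
              rw [hsplitGj]
          _ = (∑ᶠ e ∈ Gj, f (dE e)) + ∑ᶠ x ∈ G \ (dE '' Hg), f x := by rw [hkey']
          _ = (∑ᶠ e ∈ Hb, f (dE e)) + ((∑ᶠ x ∈ dE '' Hg, f x) + ∑ᶠ x ∈ G \ (dE '' Hg), f x) := by
              rw [hsplitGj, himg]; abel
          _ = (∑ᶠ e ∈ Hb, f (dE e)) + SG := by rw [← h6]
          _ = SG := hHbsum
/-- In a `c`-closed weighted system, any finite set `B` of trees of sort `A` outside
`T_R^{(c)}` may be added to the finite `⊕`-summation over `(T_R^{(c)})_A` without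
changing its value. -/
theorem outside_trees_spawned {N R K : Type} [Fintype N] [Nonempty N] [Fintype R]
    [AddCommMonoid K]
    (S : InfSum K) (hdc : S.DComplete)
    (Ω : ∀ n : ℕ, Set ((Fin n → K) → K)) (hΩ0 : HasZeroOps Ω) (hΩd : DistributiveOps Ω)
    (lhs : R → N) (rhs : R → List N)
    (wt : ∀ r : R, (Fin (rhs r).length → K) → K) (hwt : ∀ r : R, wt r ∈ Ω (rhs r).length)
    (c : ℕ) (hclosed : CClosed lhs rhs wt c) :
    ∀ (l : ℕ) (A : N) (B : Set (RT R fun r => (rhs r).length)),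
      B ⊆ TRA lhs rhs A \ TRcset lhs rhs c → B.Finite → B.ncard = l →
      (∑ᶠ d ∈ TRcset lhs rhs c ∩ TRA lhs rhs A, wtval wt d)
        = ∑ᶠ d ∈ (TRcset lhs rhs c ∩ TRA lhs rhs A) ∪ B, wtval wt d := by
  intro l A B hB hBfin hcard
  by_cases hfin : ((TRcset lhs rhs c ∩ TRA lhs rhs A) ∩ Function.support (wtval wt)).Finite
  · have hdisj : Disjoint (TRcset lhs rhs c ∩ TRA lhs rhs A) B :=
      Set.disjoint_left.mpr fun x hx hxB => (hB hxB).2 hx.1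
    rw [finsum_mem_union' hdisj hfin (hBfin.inter_of_left _)]
    have habs : ∀ d ∈ B, wtval wt d + ∑ᶠ e ∈ TRcset lhs rhs c ∩ TRA lhs rhs A, wtval wt e
        = ∑ᶠ e ∈ TRcset lhs rhs c ∩ TRA lhs rhs A, wtval wt e := by
      intro d hd
      obtain ⟨⟨hdws, hdroot⟩, hdbad⟩ := hB hd
      obtain ⟨G, hGfin, hGsub, -, hGabs⟩ :=
        absorbing_set hΩd hwt hclosed (RT.size d) d le_rfl hdws hdbad
      have hGsub' : G ⊆ TRcset lhs rhs c ∩ TRA lhs rhs A := by rwa [hdroot] at hGsub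
      exact absorb_subset hGsub' hGfin hfin hGabs
    have hBabs := absorb_finsum hBfin habs
    exact ((add_comm _ _).trans hBabs).symm
  · have h1 : ((TRcset lhs rhs c ∩ TRA lhs rhs A) ∩ Function.support (wtval wt)).Infinite :=
      hfin
    have h2 : (((TRcset lhs rhs c ∩ TRA lhs rhs A) ∪ B) ∩ Function.support (wtval wt)).Infinite :=
      h1.mono (fun x hx => ⟨Or.inl hx.1, hx.2⟩)
    rw [finsum_mem_eq_zero_of_infinite h1, finsum_mem_eq_zero_of_infinite h2]
end

section
/- Let c ∈ ℕ, let the weighted system (N,R,wt,K) be c-closed, and consider the value computation recursion (V_n, 𝒱_n). Then for every n ∈ ℕ and every nonterminal A ∈ N: V_n(A) = ⊕_{d ∈ 𝒱_n(A)} wt(d)_K (a finite ⊕-sum, since 𝒱_n(A) is finite). -/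
open scoped Classical

section ValueComputation

variable {K : Type} [AddCommMonoid K] {N R : Type} [Fintype N] [Nonempty N] [Fintype R]

/-- `select e n` : the nonterminal treated in the `n`-th iteration of the inner for loop,
given an enumeration `e` of the nonterminals. -/
def select (e : Fin (Fintype.card N) → N) (n : ℕ) : N :=
  e ⟨n % Fintype.card N, Nat.mod_lt _ Fintype.card_pos⟩

/-- The value computation recursion `V_n : N → K`. -/
noncomputable def Vrec (lhs : R → N) (rhs : R → List N)
    (wt : ∀ r : R, (Fin (rhs r).length → K) → K)
    (e : Fin (Fintype.card N) → N) : ℕ → N → K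
  | 0, _ => 0
  | n + 1, A =>
      if select e n = A then
        ∑ᶠ r ∈ {r : R | lhs r = A}, wt r fun i => Vrec lhs rhs wt e n ((rhs r).get i)
      else Vrec lhs rhs wt e n A

/-- The derivation-set recursion `𝒱_n : N → P(T_R)`. -/
noncomputable def Mrec (lhs : R → N) (rhs : R → List N) (e : Fin (Fintype.card N) → N) :
    ℕ → N → Set (RT R fun r => (rhs r).length)
  | 0, _ => ∅
  | n + 1, A =>
      if select e n = A then
        {d | ∃ (r : R) (_ : lhs r = A) (ts : Fin (rhs r).length → RT R fun r => (rhs r).length),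
          d = RT.node r ts ∧ ∀ i, ts i ∈ Mrec lhs rhs e n ((rhs r).get i)}
      else Mrec lhs rhs e n A

end ValueComputation


section aux
variable {K : Type} [AddCommMonoid K]

lemma omega_update_sum {k : ℕ} (ω : (Fin k → K) → K)
    (hdist : ∀ (x : Fin k → K) (i : Fin k) (a b : K),
      ω (Function.update x i (a + b)) = ω (Function.update x i a) + ω (Function.update x i b))
    (hzero : ∀ x : Fin k → K, (∃ i, x i = 0) → ω x = 0)
    {D : Type} (s : Finset D) (f : D → K) (x : Fin k → K) (i : Fin k) :
    ω (Function.update x i (∑ d ∈ s, f d)) = ∑ d ∈ s, ω (Function.update x i (f d)) := by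
  classical
  induction s using Finset.induction_on with
  | empty =>
      simp only [Finset.sum_empty]
      exact hzero _ ⟨i, by simp⟩
  | insert _ _ h ih =>
      rw [Finset.sum_insert h, hdist, ih, Finset.sum_insert h]

lemma omega_pi_sum {D : Type} :
    ∀ {k : ℕ} (ω : (Fin k → K) → K),
    (∀ (x : Fin k → K) (i : Fin k) (a b : K),
      ω (Function.update x i (a + b)) = ω (Function.update x i a) + ω (Function.update x i b)) →
    (∀ x : Fin k → K, (∃ i, x i = 0) → ω x = 0) →
    ∀ (s : Fin k → Finset D) (f : Fin k → D → K),
    ω (fun i => ∑ d ∈ s i, f i d) = ∑ t ∈ Fintype.piFinset s, ω (fun i => f i (t i)) := by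
  intro k
  induction k with
  | zero =>
      intro ω hdist hzero s f
      rw [Fintype.piFinset_of_isEmpty]
      rw [Finset.sum_eq_single_of_mem (fun i : Fin 0 => (i.elim0 : D)) (Finset.mem_univ _)]
      · congr 1; funext i; exact i.elim0
      · intro t _ ht; exact absurd (funext fun i => i.elim0) ht
  | succ k ih =>
      intro ω hdist hzero s f
      have h1 : (fun i => ∑ d ∈ s i, f i d)
          = Fin.cons (∑ d ∈ s 0, f 0 d) (fun i : Fin k => ∑ d ∈ s i.succ, f i.succ d) := by
        funext i
        refine Fin.cases ?_ ?_ i <;> simp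
      rw [h1]
      have h2 : Fin.cons (∑ d ∈ s 0, f 0 d) (fun i : Fin k => ∑ d ∈ s i.succ, f i.succ d)
          = Function.update (Fin.cons (α := fun _ => K) 0 (fun i : Fin k => ∑ d ∈ s i.succ, f i.succ d)) 0
              (∑ d ∈ s 0, f 0 d) := by
        rw [Fin.update_cons_zero]
      rw [h2, omega_update_sum ω hdist hzero]
      have h3 : ∀ d : D,
          ω (Function.update (Fin.cons (α := fun _ => K) 0 (fun i : Fin k => ∑ d ∈ s i.succ, f i.succ d)) 0 (f 0 d))
          = ∑ t ∈ Fintype.piFinset (fun i : Fin k => s i.succ),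
              ω (Fin.cons (f 0 d) (fun i => f i.succ (t i))) := by
        intro d
        rw [Fin.update_cons_zero]
        have := ih (fun y : Fin k → K => ω (Fin.cons (f 0 d) y))
          (by
            intro x i a b
            simp only [Fin.cons_update]
            exact hdist _ _ _ _)
          (by
            rintro x ⟨i, hi⟩
            exact hzero _ ⟨i.succ, by simp [hi]⟩)
          (fun i => s i.succ) (fun i => f i.succ)
        exact this
      simp only [h3]
      rw [← Finset.sum_product']
      refine Finset.sum_nbij' (fun p : D × (Fin k → D) => (Fin.cons p.1 p.2 : Fin (k+1) → D))
        (fun t : Fin (k+1) → D => ((t 0, Fin.tail t) : D × (Fin k → D))) ?_ ?_ ?_ ?_ ?_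
      · rintro ⟨d, t⟩ hp
        simp only [Finset.mem_product, Fintype.mem_piFinset] at hp
        rw [Fintype.mem_piFinset]
        intro i
        refine Fin.cases ?_ ?_ i
        · simpa using hp.1
        · intro j; simpa using hp.2 j
      · intro t ht
        rw [Fintype.mem_piFinset] at ht
        simp only [Finset.mem_product, Fintype.mem_piFinset]
        exact ⟨ht 0, fun i => ht i.succ⟩
      · rintro ⟨d, t⟩ _; simp [Fin.tail]
      · intro t _; exact Fin.cons_self_tail t
      · rintro ⟨d, t⟩ _
        congr 1
        funext i
        refine Fin.cases ?_ ?_ i <;> simp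

end aux


section mrecfin
variable {K : Type} [AddCommMonoid K] {N R : Type} [Fintype N] [Nonempty N] [Fintype R]

lemma Mrec_finite (lhs : R → N) (rhs : R → List N) (e : Fin (Fintype.card N) → N) :
    ∀ (n : ℕ) (A : N), (Mrec lhs rhs e n A).Finite := by
  intro n
  induction n with
  | zero => intro A; simp [Mrec]
  | succ n ih =>
      intro A
      show (if select e n = A then _ else Mrec lhs rhs e n A).Finite
      split
      · refine Set.Finite.subset (Set.finite_iUnion (ι := R) fun r =>
          Set.Finite.image (fun ts => RT.node r ts)
            (Set.Finite.pi (t := fun i : Fin (rhs r).length =>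
              Mrec lhs rhs e n ((rhs r).get i)) fun i => ih _)) ?_
        rintro d ⟨r, _, ts, rfl, hts⟩
        exact Set.mem_iUnion.2 ⟨r, ⟨ts, fun i _ => hts i, rfl⟩⟩
      · exact ih A

end mrecfin

/-- In a `c`-closed weighted system, the value `V_n(A)` computed by the value computation
algorithm equals the finite `⊕`-sum of the weights of the trees in `𝒱_n(A)`. -/
theorem Vrec_eq_sum_Mrec {N R K : Type} [Fintype N] [Nonempty N] [Fintype R]
    [AddCommMonoid K]
    (S : InfSum K) (hdc : S.DComplete)
    (Ω : ∀ n : ℕ, Set ((Fin n → K) → K)) (hΩ0 : HasZeroOps Ω) (hΩd : DistributiveOps Ω)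
    (lhs : R → N) (rhs : R → List N)
    (wt : ∀ r : R, (Fin (rhs r).length → K) → K) (hwt : ∀ r : R, wt r ∈ Ω (rhs r).length)
    (c : ℕ) (hclosed : CClosed lhs rhs wt c)
    (e : Fin (Fintype.card N) → N) (he : Function.Bijective e) :
    ∀ (n : ℕ) (A : N),
      Vrec lhs rhs wt e n A = ∑ᶠ d ∈ Mrec lhs rhs e n A, wtval wt d := by
  classical
  intro n
  induction n with
  | zero => intro A; simp [Vrec, Mrec]
  | succ n ih =>
      intro A
      by_cases h : select e n = A
      · rw [show Vrec lhs rhs wt e (n+1) A =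
            ∑ᶠ r ∈ {r : R | lhs r = A}, wt r fun i => Vrec lhs rhs wt e n ((rhs r).get i)
            from by simp [Vrec, h]]
        -- Finsets
        set Fn : ∀ B : N, Finset (RT R fun r => (rhs r).length) :=
          fun B => (Mrec_finite lhs rhs e n B).toFinset with hFn
        have hIH : ∀ B : N, Vrec lhs rhs wt e n B = ∑ d ∈ Fn B, wtval wt d := by
          intro B
          rw [ih B, ← finsum_mem_coe_finset]
          congr 1
          simp [hFn]
        have hrset : {r : R | lhs r = A}
            = ↑(Finset.univ.filter fun r : R => lhs r = A) := by
          ext r; simp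
        rw [hrset, finsum_mem_coe_finset]
        -- expand each wt r using distributivity
        have hstep : ∀ r : R, lhs r = A →
            (wt r fun i => Vrec lhs rhs wt e n ((rhs r).get i))
            = ∑ ts ∈ Fintype.piFinset (fun i => Fn ((rhs r).get i)),
                wtval wt (RT.node r ts) := by
          intro r _
          have hd := hΩd (rhs r).length (wt r) (hwt r)
          have := omega_pi_sum (wt r) hd.1 hd.2
            (fun i => Fn ((rhs r).get i)) (fun i d => wtval wt d)
          simp only [hIH]
          rw [this]
          rfl
        -- the RHS set as a Finset
        have hset : Mrec lhs rhs e (n+1) A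
            = ↑((Finset.univ.filter fun r : R => lhs r = A).biUnion fun r =>
                (Fintype.piFinset fun i => Fn ((rhs r).get i)).image fun ts =>
                  RT.node r ts) := by
          rw [show Mrec lhs rhs e (n+1) A =
              {d | ∃ (r : R) (_ : lhs r = A) (ts : Fin (rhs r).length →
                  RT R fun r => (rhs r).length),
                d = RT.node r ts ∧ ∀ i, ts i ∈ Mrec lhs rhs e n ((rhs r).get i)}
              from by simp [Mrec, h]]
          ext d
          simp only [Set.mem_setOf_eq, Finset.coe_biUnion, Finset.coe_filter,
            Finset.mem_univ, true_and, Set.mem_iUnion, Finset.mem_coe,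
            Finset.mem_image, Fintype.mem_piFinset, hFn, Set.Finite.mem_toFinset,
            Set.mem_setOf_eq]
          constructor
          · rintro ⟨r, hr, ts, rfl, hts⟩
            exact ⟨r, hr, ts, hts, rfl⟩
          · rintro ⟨r, hr, ts, hts, rfl⟩
            exact ⟨r, hr, ts, rfl, hts⟩
        rw [hset, finsum_mem_coe_finset]
        rw [Finset.sum_biUnion]
        · refine Finset.sum_congr rfl ?_
          intro r hr
          rw [Finset.mem_filter] at hr
          rw [hstep r hr.2]
          rw [Finset.sum_image]
          intro ts _ ts' _ hnode
          injection hnode with h1 h2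
        · intro r hr r' hr' hne
          simp only [Function.onFun]
          rw [Finset.disjoint_left]
          intro d hd hd'
          simp only [Finset.mem_image] at hd hd'
          obtain ⟨ts, _, rfl⟩ := hd
          obtain ⟨ts', _, heq⟩ := hd'
          injection heq with h1 h2
          exact hne h1.symm
      · rw [show Vrec lhs rhs wt e (n+1) A = Vrec lhs rhs wt e n A from by simp [Vrec, h],
            show Mrec lhs rhs e (n+1) A = Mrec lhs rhs e n A from by simp [Mrec, h]]
        exact ih A
end

section
/- Let c ∈ ℕ, let the weighted system (N,R,wt,K) be c-closed, and consider the value computation recursion (V_n, 𝒱_n). Then for every n ∈ ℕ and every nonterminal A ∈ N: if V_{n+1}(A) ≠ V_n(A), then 𝒱_{n+1}(A) ∩ T_R^{(c)} is a proper superset of 𝒱_n(A) ∩ T_R^{(c)}. -/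
open scoped Classical

namespace RTAux

open RT

variable {R : Type} {ar : R → ℕ}

lemma subAt_nil (d : RT R ar) : RT.subAt d [] = some d := by cases d <;> rfl

/-- Number of nodes of a tree. -/
def tsize : RT R ar → ℕ
  | .node _ ts => (Finset.univ.sum fun i => tsize (ts i)) + 1

lemma tsize_pos (d : RT R ar) : 0 < tsize d := by
  cases d with
  | node r ts => simp [tsize]

lemma tsize_child (r : R) (ts : Fin (ar r) → RT R ar) (i : Fin (ar r)) :
    tsize (ts i) < tsize (RT.node r ts) := by
  have : tsize (ts i) ≤ Finset.univ.sum fun j => tsize (ts j) :=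
    Finset.single_le_sum (f := fun j => tsize (ts j)) (fun j _ => Nat.zero_le _)
      (Finset.mem_univ i)
  simp only [tsize]; omega

lemma tsize_subAt {d t : RT R ar} {p : List ℕ} (h : subAt d p = some t) :
    tsize t ≤ tsize d := by
  induction p generalizing d with
  | nil => simp [subAt] at h; subst h; rfl
  | cons i p ih =>
    cases d with
    | node r ts =>
      simp only [subAt] at h
      split at h
      · exact le_of_lt (lt_of_le_of_lt (ih h) (tsize_child _ _ _))
      · exact absurd h (by simp)

lemma tsize_subAt_lt {d t : RT R ar} {i : ℕ} {p : List ℕ}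
    (h : subAt d (i :: p) = some t) : tsize t < tsize d := by
  cases d with
  | node r ts =>
    simp only [subAt] at h
    split at h
    · exact lt_of_le_of_lt (tsize_subAt h) (tsize_child _ _ _)
    · exact absurd h (by simp)

lemma length_lt_tsize {d t : RT R ar} {p : List ℕ} (h : subAt d p = some t) :
    p.length < tsize d := by
  induction p generalizing d with
  | nil => simpa using tsize_pos d
  | cons i p ih =>
    cases d with
    | node r ts =>
      simp only [subAt] at h
      split at h
      · exact lt_of_lt_of_le (by simpa using Nat.succ_lt_succ (ih h))
          (tsize_child _ _ _)
      · exact absurd h (by simp)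

lemma subAt_append (d : RT R ar) (p q : List ℕ) :
    subAt d (p ++ q) = (subAt d p).bind (fun t => subAt t q) := by
  induction p generalizing d with
  | nil => simp [subAt]
  | cons i p ih =>
    cases d with
    | node r ts =>
      simp only [List.cons_append, subAt]
      split
      · exact ih _
      · rfl

lemma replaceAt_nil (d s : RT R ar) : replaceAt d [] s = s := by
  cases d <;> rfl

lemma subAt_replaceAt_self {d t : RT R ar} {p : List ℕ} (h : subAt d p = some t)
    (s : RT R ar) : subAt (replaceAt d p s) p = some s := by
  induction p generalizing d with
  | nil => rw [replaceAt_nil, subAt_nil]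
  | cons i p ih =>
    cases d with
    | node r ts =>
      simp only [subAt] at h
      split at h
      case isTrue hi =>
        simp only [replaceAt, subAt]
        rw [dif_pos hi]
        simpa using ih h
      case isFalse => exact absurd h (by simp)

lemma replaceAt_self {d t : RT R ar} {p : List ℕ} (h : subAt d p = some t) :
    replaceAt d p t = d := by
  induction p generalizing d with
  | nil => simp [subAt] at h; simp [replaceAt, h]
  | cons i p ih =>
    cases d with
    | node r ts =>
      simp only [subAt] at h
      split at h
      case isTrue hi =>
        simp only [replaceAt]
        congr 1
        funext j
        by_cases hj : j.1 = i
        · have : j = ⟨i, hi⟩ := Fin.ext hj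
          subst this
          simp [ih h]
        · simp [hj]
      case isFalse => exact absurd h (by simp)

lemma replaceAt_replaceAt (d : RT R ar) (p : List ℕ) (a b : RT R ar) :
    replaceAt (replaceAt d p a) p b = replaceAt d p b := by
  induction p generalizing d with
  | nil => rw [replaceAt_nil, replaceAt_nil]
  | cons i p ih =>
    cases d with
    | node r ts =>
      simp only [replaceAt]
      congr 1
      funext j
      by_cases hj : j.1 = i <;> simp [hj, ih]

lemma replaceAt_append {d t : RT R ar} {p : List ℕ} (h : subAt d p = some t)
    (q : List ℕ) (s : RT R ar) :
    replaceAt d (p ++ q) s = replaceAt d p (replaceAt t q s) := by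
  induction p generalizing d with
  | nil => simp [subAt] at h; subst h; rw [List.nil_append, replaceAt_nil]
  | cons i p ih =>
    cases d with
    | node r ts =>
      simp only [subAt] at h
      split at h
      case isTrue hi =>
        simp only [List.cons_append, replaceAt]
        congr 1
        funext j
        by_cases hj : j.1 = i
        · have : j = ⟨i, hi⟩ := Fin.ext hj
          subst this
          simp [ih h]
        · simp [hj]
      case isFalse => exact absurd h (by simp)

lemma tsize_replaceAt {d t : RT R ar} {p : List ℕ} (h : subAt d p = some t)
    (s : RT R ar) : tsize (replaceAt d p s) + tsize t = tsize d + tsize s := by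
  induction p generalizing d with
  | nil => simp [subAt] at h; subst h; rw [replaceAt_nil]; omega
  | cons i p ih =>
    cases d with
    | node r ts =>
      simp only [subAt] at h
      split at h
      case isTrue hi =>
        have key := ih h
        simp only [replaceAt, tsize]
        set i0 : Fin (ar r) := ⟨i, hi⟩ with hi0
        have hfun : (fun j => tsize (if j.1 = i then replaceAt (ts j) p s else ts j))
            = Function.update (fun j => tsize (ts j)) i0 (tsize (replaceAt (ts i0) p s)) := by
          funext j
          by_cases hj : j.1 = i
          · have hj' : j = i0 := Fin.ext hj
            subst hj'
            simp [hj]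
          · have hj' : j ≠ i0 := fun hc => hj (by rw [hc])
            simp [hj, Function.update_of_ne hj']
        rw [hfun, Finset.sum_update_of_mem (Finset.mem_univ i0)]
        have hsplit : (Finset.univ.sum fun j => tsize (ts j))
            = tsize (ts i0) + ∑ j ∈ Finset.univ.erase i0, tsize (ts j) :=
          (Finset.add_sum_erase _ _ (Finset.mem_univ i0)).symm
        rw [Finset.erase_eq] at hsplit
        omega
      case isFalse => exact absurd h (by simp)

lemma seqTo_length {d : RT R ar} {p : List ℕ} {ρ : List R} (h : seqTo d p = some ρ) :
    ρ.length = p.length + 1 := by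
  induction p generalizing d ρ with
  | nil => cases d; simp [seqTo] at h; subst h; rfl
  | cons i p ih =>
    cases d with
    | node r ts =>
      simp only [seqTo] at h
      split at h
      · rcases Option.map_eq_some_iff.1 h with ⟨l, hl, rfl⟩
        simp [ih hl]
      · exact absurd h (by simp)

lemma seqTo_head {d : RT R ar} {p : List ℕ} {ρ : List R} (h : seqTo d p = some ρ) :
    ρ.head? = some d.rootRule := by
  induction p generalizing d ρ with
  | nil => cases d; simp [seqTo] at h; subst h; rfl
  | cons i p ih =>
    cases d with
    | node r ts =>
      simp only [seqTo] at h
      split at h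
      · rcases Option.map_eq_some_iff.1 h with ⟨l, hl, rfl⟩
        simp [rootRule]
      · exact absurd h (by simp)

lemma seqTo_sub {d : RT R ar} {p : List ℕ} {ρ : List R} (h : seqTo d p = some ρ) :
    ∃ t, subAt d p = some t ∧ ρ.getLast? = some t.rootRule := by
  induction p generalizing d ρ with
  | nil => cases d; simp [seqTo] at h; subst h; exact ⟨_, rfl, rfl⟩
  | cons i p ih =>
    cases d with
    | node r ts =>
      simp only [seqTo] at h
      split at h
      case isTrue hi =>
        rcases Option.map_eq_some_iff.1 h with ⟨l, hl, rfl⟩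
        rcases ih hl with ⟨t, ht, hlast⟩
        refine ⟨t, by simpa [subAt, hi] using ht, ?_⟩
        cases l with
        | nil => simp [seqTo_length hl] at hlast
        | cons a l' => rw [List.getLast?_cons_cons]; exact hlast
      case isFalse => exact absurd h (by simp)

lemma subAt_seqTo {d t : RT R ar} {p : List ℕ} (h : subAt d p = some t) :
    ∃ ρ, seqTo d p = some ρ := by
  induction p generalizing d with
  | nil => cases d; exact ⟨_, rfl⟩
  | cons i p ih =>
    cases d with
    | node r ts =>
      simp only [subAt] at h
      split at h
      case isTrue hi =>
        rcases ih h with ⟨ρ, hρ⟩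
        exact ⟨r :: ρ, by simp [seqTo, hi, hρ]⟩
      case isFalse => exact absurd h (by simp)

lemma seqTo_drop {d : RT R ar} {p : List ℕ} {ρ : List R} (h : seqTo d p = some ρ)
    {j : ℕ} (hj : j ≤ p.length) :
    ∃ t, subAt d (List.take j p) = some t ∧ seqTo t (List.drop j p) = some (List.drop j ρ) := by
  induction j generalizing d p ρ with
  | zero => exact ⟨d, by simp [subAt], by simpa using h⟩
  | succ j ih =>
    cases p with
    | nil => simp at hj
    | cons i p =>
      cases d with
      | node r ts =>
        simp only [seqTo] at h
        split at h
        case isTrue hi =>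
          rcases Option.map_eq_some_iff.1 h with ⟨l, hl, rfl⟩
          rcases ih hl (by simpa using hj) with ⟨t, ht1, ht2⟩
          exact ⟨t, by simpa [List.take, subAt, hi] using ht1, by simpa using ht2⟩
        case isFalse => exact absurd h (by simp)

end RTAux
namespace RTAux

open RT

variable {R : Type} {ar : R → ℕ}

lemma finite_tsize_le [Fintype R] : ∀ n : ℕ, {d : RT R ar | tsize d ≤ n}.Finite := by
  intro n
  induction n with
  | zero =>
    convert Set.finite_empty
    ext d
    simpa using Nat.not_le_of_lt (tsize_pos d)
  | succ n ih =>
    have hsub : {d : RT R ar | tsize d ≤ n + 1} ⊆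
        ⋃ r : R, (fun ts => RT.node r ts) ''
          (Set.univ.pi fun _ : Fin (ar r) => {d : RT R ar | tsize d ≤ n}) := by
      intro d hd
      cases d with
      | node r ts =>
        refine Set.mem_iUnion.2 ⟨r, ⟨ts, fun i _ => ?_, rfl⟩⟩
        have h1 := tsize_child r ts i
        simp only [Set.mem_setOf_eq] at hd ⊢
        omega
    exact Set.Finite.subset
      (Set.finite_iUnion fun r => (Set.Finite.pi fun _ => ih).image _) hsub

lemma cutW_tsize {w : List R} (hw : 1 < w.length) {d d' : RT R ar} (h : CutW w d d') :
    tsize d' < tsize d := by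
  obtain ⟨p, q, t, s, hp, hq, hseq, rfl⟩ := h
  have hlen : w.length = q.length + 1 := seqTo_length hseq
  obtain ⟨i, q', rfl⟩ : ∃ i q', q = i :: q' := by
    cases q with
    | nil => simp at hlen; omega
    | cons a b => exact ⟨_, _, rfl⟩
  have h1 : tsize s < tsize t := tsize_subAt_lt hq
  have h2 := tsize_replaceAt hp s
  have h3 := tsize_subAt hp
  omega

lemma cotreesW_tsize {w : List R} (hw : 1 < w.length) {d d' : RT R ar}
    (h : d' ∈ cotreesW w d) : tsize d' < tsize d := by
  induction h with
  | single h1 => exact cutW_tsize hw h1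
  | tail _ h2 ih => exact lt_trans (cutW_tsize hw h2) ih

lemma finite_cotreesW [Fintype R] {w : List R} (hw : 1 < w.length) (d : RT R ar) :
    (cotreesW w d).Finite :=
  Set.Finite.subset (finite_tsize_le (tsize d))
    (fun _ h => le_of_lt (cotreesW_tsize hw h))

lemma cutW_lift {d x y t₀ : RT R ar} {p₀ : List ℕ} (h0 : subAt d p₀ = some t₀)
    {w : List R} (h : CutW w x y) :
    CutW w (replaceAt d p₀ x) (replaceAt d p₀ y) := by
  obtain ⟨p, q, t, s, hp, hq, hseq, rfl⟩ := h
  refine ⟨p₀ ++ p, q, t, s, ?_, hq, hseq, ?_⟩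
  · rw [subAt_append, subAt_replaceAt_self h0]
    exact hp
  · rw [replaceAt_append (subAt_replaceAt_self h0 x), replaceAt_replaceAt]

lemma cotreesW_lift {d x t₀ : RT R ar} {p₀ : List ℕ} (h0 : subAt d p₀ = some t₀)
    {w : List R} (h : x ∈ cotreesW w t₀) : replaceAt d p₀ x ∈ cotreesW w d := by
  induction h with
  | single h1 =>
    have := cutW_lift h0 h1
    rw [replaceAt_self h0] at this
    exact Relation.TransGen.single this
  | tail _ h2 ih => exact Relation.TransGen.tail ih (cutW_lift h0 h2)

end RTAux
namespace RTAux

variable {R : Type}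

lemma elementary_nonnil {w : List R} (h : ElementaryCycle w) : w ≠ [] := by
  intro h0; subst h0; simp [ElementaryCycle] at h

lemma elementary_pair (r : R) : ElementaryCycle [r, r] :=
  ⟨by simp, by simp, by simp, by simp⟩

lemma not_infix_nil {w : List R} (h : ElementaryCycle w) : ¬ w <:+: ([] : List R) := by
  intro hc
  exact elementary_nonnil h (List.eq_nil_of_infix_nil hc)

lemma cwc_zero {w ρ : List R} (hew : ElementaryCycle w) (h : ¬ w <:+: ρ) :
    CWCyclic 0 w ρ := by
  refine ⟨hew, fun _ => ρ, by simp, ?_⟩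
  intro i hi
  interval_cases i
  exact h

lemma infix_cons_elim {w l : List R} {x : R} (h : w <:+: (x :: l)) :
    w <+: (x :: l) ∨ w <:+: l := by
  obtain ⟨a, b, hab⟩ := h
  cases a with
  | nil => exact Or.inl ⟨b, by simpa using hab⟩
  | cons y a' =>
    right
    simp only [List.cons_append] at hab
    injection hab with h1 h2
    exact ⟨a', b, h2⟩

lemma greedy_aux {w : List R} (hew : ElementaryCycle w) :
    ∀ n (ρ : List R), ρ.length ≤ n → w <:+: ρ → ∃ c, 1 ≤ c ∧ CWCyclic c w ρ := by
  intro n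
  induction n with
  | zero =>
    intro ρ hlen hinf
    have : ρ = [] := List.length_eq_zero_iff.1 (Nat.le_zero.1 hlen)
    subst this
    exact absurd hinf (not_infix_nil hew)
  | succ n ih =>
    intro ρ hlen hinf
    by_cases hpre : w <+: ρ
    · obtain ⟨b, rfl⟩ := hpre
      have hblen : b.length ≤ n := by
        have h2 := hlen; rw [List.length_append] at h2
        have h1 : 1 < w.length := hew.1
        omega
      by_cases hb : w <:+: b
      · obtain ⟨c, hc1, hew', v, hdec, hnot⟩ := ih b hblen hb
        refine ⟨c + 1, by omega, hew,
          fun i => Nat.casesOn i [] (fun k => v k), ?_, ?_⟩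
        · show w ++ b = [] ++ (List.map (fun i => w ++ v i) (List.range (c + 1))).flatten
          rw [List.nil_append, List.range_succ_eq_map, List.map_cons, List.flatten_cons,
            List.map_map]
          show w ++ b = (w ++ v 0) ++ (List.map (fun i => w ++ v (i + 1)) (List.range c)).flatten
          rw [hdec, List.append_assoc]
        · intro i hi
          cases i with
          | zero => exact not_infix_nil hew
          | succ i' => exact hnot i' (by omega)
      · refine ⟨1, le_refl 1, hew, fun i => Nat.casesOn i [] (fun _ => b), ?_, ?_⟩
        · show w ++ b = [] ++ (List.map (fun _ => w ++ b) (List.range 1)).flatten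
          simp
        · intro i hi
          cases i with
          | zero => exact not_infix_nil hew
          | succ i' => exact hb
    · cases ρ with
      | nil => exact absurd hinf (not_infix_nil hew)
      | cons x ρ' =>
        have hinf' : w <:+: ρ' := by
          rcases infix_cons_elim hinf with h1 | h1
          · exact absurd h1 hpre
          · exact h1
        obtain ⟨c, hc1, hew', v, hdec, hnot⟩ := ih ρ' (by simpa using hlen) hinf'
        refine ⟨c, hc1, hew,
          fun i => Nat.casesOn i (x :: v 0) (fun k => v (k + 1)), ?_, ?_⟩
        · show x :: ρ' = (x :: v 0) ++ (List.map (fun i => w ++ v (i + 1)) (List.range c)).flatten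
          rw [hdec]
          simp
        · intro i hi
          cases i with
          | zero =>
            intro hc
            rcases infix_cons_elim hc with h1 | h1
            · exact hpre (h1.trans (by rw [hdec]; simp [List.prefix_append]))
            · exact hnot 0 (by omega) h1
          | succ i' => exact hnot (i' + 1) hi

lemma greedy {w ρ : List R} (hew : ElementaryCycle w) (hinf : w <:+: ρ) :
    ∃ c, 1 ≤ c ∧ CWCyclic c w ρ :=
  greedy_aux hew ρ.length ρ (le_refl _) hinf

lemma length_le_flatten {α : Type*} :
    ∀ L : List (List α), (∀ l ∈ L, l ≠ []) → L.length ≤ L.flatten.length := by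
  intro L
  induction L with
  | nil => simp
  | cons l L ih =>
    intro h
    have h1 : l ≠ [] := h l (by simp)
    have h2 : 1 ≤ l.length := by
      cases l with
      | nil => exact absurd rfl h1
      | cons a b => simp
    have := ih (fun l' hl' => h l' (by simp [hl']))
    simp only [List.flatten_cons, List.length_cons, List.length_append]
    omega

lemma cwc_le_length {c : ℕ} {w ρ : List R} (h : CWCyclic c w ρ) : c ≤ ρ.length := by
  obtain ⟨hew, v, hdec, hnot⟩ := h
  have hblocks : ∀ l ∈ (List.range c).map fun i => w ++ v (i + 1), l ≠ [] := by
    intro l hl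
    simp only [List.mem_map] at hl
    obtain ⟨i, _, rfl⟩ := hl
    intro hc
    exact elementary_nonnil hew (by simpa using (List.append_eq_nil_iff.1 hc).1)
  have h1 := length_le_flatten _ hblocks
  have h2 : ((List.range c).map fun i => w ++ v (i + 1)).length = c := by simp
  rw [hdec]
  simp only [List.length_append]
  omega

lemma exists_ccyclic (r : R) (ρ : List R) : ∃ L, CCyclic L ρ := by
  classical
  set P : ℕ → Prop := fun c => ∃ w, CWCyclic c w ρ with hP
  have hbound : ∀ c, P c → c ≤ ρ.length := fun c ⟨w, hw⟩ => cwc_le_length hw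
  have hex : ∃ c, P c ∧ c ≤ ρ.length := by
    by_cases hinf : [r, r] <:+: ρ
    · obtain ⟨c, hc1, hcw⟩ := greedy (elementary_pair r) hinf
      exact ⟨c, ⟨_, hcw⟩, cwc_le_length hcw⟩
    · exact ⟨0, ⟨[r, r], cwc_zero (elementary_pair r) hinf⟩, Nat.zero_le _⟩
  obtain ⟨c0, hc0, hc0le⟩ := hex
  refine ⟨Nat.findGreatest P ρ.length, Nat.findGreatest_spec hc0le hc0, ?_⟩
  intro c' hc' w' hcw
  exact Nat.findGreatest_is_greatest hc' (cwc_le_length hcw) ⟨w', hcw⟩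

lemma cwc_suffix {L c : ℕ} {w ρ : List R} (h : CWCyclic L w ρ) (hc : c + 1 ≤ L) :
    ∃ j, j < ρ.length ∧ CWCyclic (c + 1) w (ρ.drop j) := by
  obtain ⟨hew, v, hdec, hnot⟩ := h
  set m := L - (c + 1) with hm
  have hL : L = m + (c + 1) := by omega
  rw [hL, List.range_add, List.map_append, List.flatten_append] at hdec
  set pre := v 0 ++ ((List.range m).map fun i => w ++ v (i + 1)).flatten with hpre
  set suf := ((List.range (c + 1)).map fun x => w ++ v (m + x + 1)).flatten with hsuf
  have hdec' : ρ = pre ++ suf := by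
    rw [hdec, hpre, hsuf, List.map_map, ← List.append_assoc]
    rfl
  have hdrop : ρ.drop pre.length = suf := by
    rw [hdec', List.drop_left]
  have hsuflen : c + 1 ≤ suf.length := by
    have hblocks : ∀ l ∈ (List.range (c + 1)).map fun x => w ++ v (m + x + 1), l ≠ [] := by
      intro l hl
      simp only [List.mem_map] at hl
      obtain ⟨i, _, rfl⟩ := hl
      intro hcn
      exact elementary_nonnil hew (by simpa using (List.append_eq_nil_iff.1 hcn).1)
    have := length_le_flatten _ hblocks
    simpa [hsuf] using this
  refine ⟨pre.length, ?_, hew, fun i => Nat.casesOn i [] (fun k => v (m + k + 1)), ?_, ?_⟩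
  · rw [hdec']
    simp only [List.length_append]
    omega
  · show ρ.drop pre.length
      = [] ++ (List.map (fun i => w ++ v (m + i + 1)) (List.range (c + 1))).flatten
    rw [hdrop, hsuf, List.nil_append]
  · intro i hi
    cases i with
    | zero => exact not_infix_nil hew
    | succ i' => exact hnot (m + i' + 1) (by omega)

end RTAux
namespace RTAux

open RT

variable {N R : Type}

lemma exists_leaf {ar : R → ℕ} (d : RT R ar) :
    ∃ p t, subAt d p = some t ∧ ar t.rootRule = 0 := by
  induction d with
  | node r ts ih =>
    by_cases h : ar r = 0
    · exact ⟨[], RT.node r ts, subAt_nil _, h⟩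
    · have hlt : 0 < ar r := Nat.pos_of_ne_zero h
      obtain ⟨p, t, h1, h2⟩ := ih ⟨0, hlt⟩
      exact ⟨(0 : ℕ) :: p, t, by simp [subAt, hlt, h1], h2⟩

lemma wellSorted_subAt {lhs : R → N} {rhs : R → List N}
    {d t : RT R (fun r => (rhs r).length)} {p : List ℕ}
    (hws : WellSorted lhs rhs d) (h : RT.subAt d p = some t) :
    WellSorted lhs rhs t := by
  induction p generalizing d with
  | nil => rw [subAt_nil] at h; injection h with h; subst h; exact hws
  | cons i p ih =>
    cases hws with
    | node r ts hsort hrec =>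
      simp only [subAt] at h
      split at h
      case isTrue hi => exact ih (hrec _) h
      case isFalse => exact absurd h (by simp)

lemma exists_cyclic_subtree {lhs : R → N} {rhs : R → List N} {c : ℕ}
    {d : RT R (fun r => (rhs r).length)}
    (hws : WellSorted lhs rhs d) (hbad : d ∉ TRcset lhs rhs c) :
    ∃ (p₀ : List ℕ) (d₀ : RT R (fun r => (rhs r).length)) (w : List R) (p₁ : List ℕ),
      RT.subAt d p₀ = some d₀ ∧ ElementaryCycle w ∧ LeafCW (c + 1) w d₀ p₁ := by
  classical
  set B := tsize d with hB
  set Q : ℕ → Prop := fun m => ∃ p, LeafC m d p with hQ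
  have hQbound : ∀ m, Q m → m ≤ B := by
    rintro m ⟨p, ⟨⟨t, hsub, -⟩, ρ, hseq, ⟨w, hcw⟩, -⟩⟩
    have h1 := cwc_le_length hcw
    have h2 := seqTo_length hseq
    have h3 := length_lt_tsize hsub
    omega
  obtain ⟨p', t', hsub', har'⟩ := exists_leaf d
  obtain ⟨ρ', hρ'⟩ := subAt_seqTo hsub'
  obtain ⟨L0, hL0⟩ := exists_ccyclic d.rootRule ρ'
  have hQL0 : Q L0 := ⟨p', ⟨t', hsub', har'⟩, ρ', hρ', hL0⟩
  set M := Nat.findGreatest Q B with hM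
  have hQM : Q M := Nat.findGreatest_spec (hQbound _ hQL0) hQL0
  have htree : TreeC M d := by
    refine ⟨hQM, fun c' hgt p hp => ?_⟩
    exact Nat.findGreatest_is_greatest hgt (hQbound c' ⟨p, hp⟩) ⟨p, hp⟩
  have hMc : c + 1 ≤ M := by
    by_contra hcon
    exact hbad ⟨hws, M, by omega, htree⟩
  obtain ⟨p, ⟨t, hsubp, hart⟩, ρ, hseqp, ⟨w, hcw⟩, -⟩ := hQM
  obtain ⟨j, hj, hcwj⟩ := cwc_suffix hcw hMc
  have hlen : ρ.length = p.length + 1 := seqTo_length hseqp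
  have hjle : j ≤ p.length := by omega
  obtain ⟨d₀, hsub0, hseq0⟩ := seqTo_drop hseqp hjle
  have hleaf : LeafAt d₀ (p.drop j) := by
    refine ⟨t, ?_, hart⟩
    have := subAt_append d (p.take j) (p.drop j)
    rw [List.take_append_drop] at this
    rw [this, hsub0] at hsubp
    exact hsubp
  exact ⟨p.take j, d₀, w, p.drop j, hsub0, hcwj.1, hleaf, ρ.drop j, hseq0, hcwj⟩

end RTAux
namespace RTAux

open RT

variable {K R : Type} [AddCommMonoid K] {ar : R → ℕ}

/-- Weight of a tree with the subtree at a position replaced by an abstract value. -/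
def wtRepl (wt : ∀ r : R, (Fin (ar r) → K) → K) : RT R ar → List ℕ → K → K
  | _, [], k => k
  | .node r ts, i :: p, k =>
      if h : i < ar r then
        wt r (Function.update (fun j => wtval wt (ts j)) ⟨i, h⟩ (wtRepl wt (ts ⟨i, h⟩) p k))
      else 0

lemma wtRepl_nil (wt : ∀ r : R, (Fin (ar r) → K) → K) (d : RT R ar) (k : K) :
    wtRepl wt d [] k = k := by cases d <;> rfl

lemma wtval_node (wt : ∀ r : R, (Fin (ar r) → K) → K) (r : R) (ts : Fin (ar r) → RT R ar) :
    wtval wt (RT.node r ts) = wt r fun i => wtval wt (ts i) := rfl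

lemma wtRepl_replace (wt : ∀ r : R, (Fin (ar r) → K) → K) {d t : RT R ar} {p : List ℕ}
    (h : subAt d p = some t) (s : RT R ar) :
    wtRepl wt d p (wtval wt s) = wtval wt (replaceAt d p s) := by
  induction p generalizing d with
  | nil => rw [replaceAt_nil, wtRepl_nil]
  | cons i p ih =>
    cases d with
    | node r ts =>
      simp only [subAt] at h
      split at h
      case isTrue hi =>
        show (if h : i < ar r then _ else 0) = _
        rw [dif_pos hi,
          show (RT.node r ts).replaceAt (i :: p) s
            = RT.node r (fun j => if j.1 = i then (ts j).replaceAt p s else ts j) from rfl,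
          wtval_node]
        congr 1
        funext j
        by_cases hj : j = (⟨i, hi⟩ : Fin (ar r))
        · subst hj
          rw [Function.update_self, ih h, if_pos rfl]
        · rw [Function.update_of_ne hj]
          have : ¬ (j.1 = i) := fun hc => hj (Fin.ext hc)
          simp [replaceAt, this]
      case isFalse => exact absurd h (by simp)

variable {Ω : ∀ n : ℕ, Set ((Fin n → K) → K)}
variable {wt : ∀ r : R, (Fin (ar r) → K) → K}

lemma wtRepl_zero (hΩd : DistributiveOps Ω) (hwt : ∀ r : R, wt r ∈ Ω (ar r)) {d t : RT R ar} {p : List ℕ}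
    (h : subAt d p = some t) : wtRepl wt d p 0 = 0 := by
  induction p generalizing d with
  | nil => rw [wtRepl_nil]
  | cons i p ih =>
    cases d with
    | node r ts =>
      simp only [subAt] at h
      split at h
      case isTrue hi =>
        show (if h : i < ar r then _ else 0) = 0
        rw [dif_pos hi, ih h]
        exact (hΩd _ _ (hwt r)).2 _ ⟨⟨i, hi⟩, Function.update_self _ _ _⟩
      case isFalse => exact absurd h (by simp)

lemma wtRepl_add (hΩd : DistributiveOps Ω) (hwt : ∀ r : R, wt r ∈ Ω (ar r)) {d t : RT R ar} {p : List ℕ}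
    (h : subAt d p = some t) (a b : K) :
    wtRepl wt d p (a + b) = wtRepl wt d p a + wtRepl wt d p b := by
  induction p generalizing d with
  | nil => rw [wtRepl_nil, wtRepl_nil, wtRepl_nil]
  | cons i p ih =>
    cases d with
    | node r ts =>
      simp only [subAt] at h
      split at h
      case isTrue hi =>
        show (if h : i < ar r then _ else 0) = _
        rw [dif_pos hi, ih h]
        have := (hΩd _ _ (hwt r)).1 (fun j => wtval wt (ts j)) ⟨i, hi⟩
          (wtRepl wt (ts ⟨i, hi⟩) p a) (wtRepl wt (ts ⟨i, hi⟩) p b)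
        rw [this]
        show _ = (if h : i < ar r then _ else 0) + (if h : i < ar r then _ else 0)
        rw [dif_pos hi, dif_pos hi]
      case isFalse => exact absurd h (by simp)

lemma wtRepl_sum (hΩd : DistributiveOps Ω) (hwt : ∀ r : R, wt r ∈ Ω (ar r)) {d t : RT R ar} {p : List ℕ}
    (h : subAt d p = some t) {α : Type} (T : Finset α) (f : α → K) :
    wtRepl wt d p (∑ x ∈ T, f x) = ∑ x ∈ T, wtRepl wt d p (f x) := by
  classical
  induction T using Finset.induction with
  | empty => simpa using wtRepl_zero hΩd hwt h
  | insert _ _ hx ih =>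
    rw [Finset.sum_insert hx, Finset.sum_insert hx, wtRepl_add hΩd hwt h, ih]

end RTAux
namespace RTAux

open RT

variable {K : Type} [AddCommMonoid K] {N R : Type} [Fintype N] [Nonempty N] [Fintype R]
variable {lhs : R → N} {rhs : R → List N} {e : Fin (Fintype.card N) → N}

lemma Mrec_zero (A : N) : Mrec lhs rhs e 0 A = (∅ : Set (RT R fun r => (rhs r).length)) := by
  rw [Mrec]

lemma Mrec_succ (n : ℕ) (A : N) :
    Mrec lhs rhs e (n + 1) A =
      if select e n = A then
        {d | ∃ (r : R) (_ : lhs r = A) (ts : Fin (rhs r).length → RT R fun r => (rhs r).length),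
          d = RT.node r ts ∧ ∀ i, ts i ∈ Mrec lhs rhs e n ((rhs r).get i)}
      else Mrec lhs rhs e n A := by
  rw [Mrec]

lemma Mrec_succ_pos {n : ℕ} {A : N} (h : select e n = A) :
    Mrec lhs rhs e (n + 1) A =
      {d | ∃ (r : R) (_ : lhs r = A) (ts : Fin (rhs r).length → RT R fun r => (rhs r).length),
        d = RT.node r ts ∧ ∀ i, ts i ∈ Mrec lhs rhs e n ((rhs r).get i)} := by
  rw [Mrec_succ, if_pos h]

lemma Mrec_succ_neg {n : ℕ} {A : N} (h : ¬ select e n = A) :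
    Mrec lhs rhs e (n + 1) A = Mrec lhs rhs e n A := by
  rw [Mrec_succ, if_neg h]

lemma Mrec_active {m : ℕ} {A : N} {d : RT R fun r => (rhs r).length}
    (hd : d ∈ Mrec lhs rhs e m A) :
    ∃ m' < m, select e m' = A ∧
      ∃ (r : R) (_ : lhs r = A) (ts : Fin (rhs r).length → RT R fun r => (rhs r).length),
        d = RT.node r ts ∧ ∀ i, ts i ∈ Mrec lhs rhs e m' ((rhs r).get i) := by
  induction m with
  | zero => rw [Mrec_zero] at hd; exact absurd hd (Set.notMem_empty d)
  | succ m ih =>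
    by_cases hsel : select e m = A
    · rw [Mrec_succ_pos hsel] at hd
      exact ⟨m, by omega, hsel, hd⟩
    · rw [Mrec_succ_neg hsel] at hd
      obtain ⟨m', hm', rest⟩ := ih hd
      exact ⟨m', by omega, rest⟩

lemma mem_Mrec_lhs {m : ℕ} {A : N} {d : RT R fun r => (rhs r).length}
    (hd : d ∈ Mrec lhs rhs e m A) : lhs d.rootRule = A := by
  obtain ⟨m', _, _, r, hr, ts, rfl, _⟩ := Mrec_active hd
  exact hr

lemma Mrec_wellSorted {m : ℕ} {A : N} {d : RT R fun r => (rhs r).length}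
    (hd : d ∈ Mrec lhs rhs e m A) : WellSorted lhs rhs d := by
  induction m generalizing A d with
  | zero => rw [Mrec_zero] at hd; exact absurd hd (Set.notMem_empty d)
  | succ m ih =>
    by_cases hsel : select e m = A
    · rw [Mrec_succ_pos hsel] at hd
      obtain ⟨r, hr, ts, rfl, hts⟩ := hd
      exact WellSorted.node r ts (fun i => mem_Mrec_lhs (hts i)) (fun i => ih (hts i))
    · rw [Mrec_succ_neg hsel] at hd
      exact ih hd

lemma Mrec_mono : ∀ (n : ℕ) (A : N), Mrec lhs rhs e n A ⊆ Mrec lhs rhs e (n + 1) A := by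
  intro n
  induction n using Nat.strong_induction_on with
  | _ n IH =>
    have hchain : ∀ b, b ≤ n → ∀ a, a ≤ b → ∀ A,
        Mrec lhs rhs e a A ⊆ Mrec lhs rhs e b A := by
      intro b hb
      induction b with
      | zero => intro a ha A; interval_cases a; exact subset_rfl
      | succ b ihb =>
        intro a ha A
        rcases Nat.lt_or_ge a (b + 1) with h | h
        · exact (ihb (by omega) a (by omega) A).trans (IH b (by omega) A)
        · have : a = b + 1 := by omega
          subst this; exact subset_rfl
    intro A d hd
    match n, hd with
    | 0, hd => rw [Mrec_zero] at hd; exact absurd hd (Set.notMem_empty d)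
    | (m+1), hd =>
      by_cases hsel : select e (m + 1) = A
      · rw [Mrec_succ_pos hsel]
        have inner : ∀ k, k ≤ m + 1 → ∀ d', d' ∈ Mrec lhs rhs e k A →
            d' ∈ {d | ∃ (r : R) (_ : lhs r = A)
              (ts : Fin (rhs r).length → RT R fun r => (rhs r).length),
              d = RT.node r ts ∧ ∀ i, ts i ∈ Mrec lhs rhs e (m + 1) ((rhs r).get i)} := by
          intro k
          induction k with
          | zero =>
            intro _ d' hd'
            rw [Mrec_zero] at hd'; exact absurd hd' (Set.notMem_empty d')
          | succ k ihk =>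
            intro hk d' hd'
            by_cases hsk : select e k = A
            · rw [Mrec_succ_pos hsk] at hd'
              obtain ⟨r, hr, ts, rfl, hts⟩ := hd'
              exact ⟨r, hr, ts, rfl, fun i => hchain (m + 1) le_rfl k (by omega) _ (hts i)⟩
            · rw [Mrec_succ_neg hsk] at hd'
              exact ihk (by omega) d' hd'
        exact inner (m + 1) le_rfl d hd
      · rw [Mrec_succ_neg hsel]
        exact hd

lemma Mrec_le_mono {a b : ℕ} (h : a ≤ b) (A : N) :
    Mrec lhs rhs e a A ⊆ Mrec lhs rhs e b A := by
  induction b with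
  | zero => have : a = 0 := by omega
            subst this; exact subset_rfl
  | succ b ihb =>
    rcases Nat.lt_or_ge a (b + 1) with h' | h'
    · exact (ihb (by omega)).trans (Mrec_mono b A)
    · have : a = b + 1 := by omega
      subst this; exact subset_rfl

lemma Mrec_finite : ∀ (m : ℕ) (A : N), (Mrec lhs rhs e m A).Finite := by
  intro m
  induction m with
  | zero => intro A; rw [Mrec_zero]; exact Set.finite_empty
  | succ m ih =>
    intro A
    by_cases hsel : select e m = A
    · rw [Mrec_succ_pos hsel]
      have hsub : {d | ∃ (r : R) (_ : lhs r = A)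
          (ts : Fin (rhs r).length → RT R fun r => (rhs r).length),
          d = RT.node r ts ∧ ∀ i, ts i ∈ Mrec lhs rhs e m ((rhs r).get i)} ⊆
          ⋃ r : R, (fun ts => RT.node r ts) ''
            (Set.univ.pi fun i : Fin (rhs r).length => Mrec lhs rhs e m ((rhs r).get i)) := by
        rintro d ⟨r, hr, ts, rfl, hts⟩
        exact Set.mem_iUnion.2 ⟨r, ⟨ts, fun i _ => hts i, rfl⟩⟩
      exact Set.Finite.subset
        (Set.finite_iUnion fun r => (Set.Finite.pi fun i => ih _).image _) hsub
    · rw [Mrec_succ_neg hsel]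
      exact ih A

lemma Mrec_subAt {m : ℕ} {A : N} {d t : RT R fun r => (rhs r).length} {p : List ℕ}
    (hd : d ∈ Mrec lhs rhs e m A) (h : subAt d p = some t) :
    t ∈ Mrec lhs rhs e m (lhs t.rootRule) := by
  induction p generalizing d A m with
  | nil =>
    rw [subAt_nil] at h
    injection h with h; subst h
    rwa [mem_Mrec_lhs hd]
  | cons i p ih =>
    obtain ⟨m', hm', hsel, r, hr, ts, rfl, hts⟩ := Mrec_active hd
    simp only [subAt] at h
    split at h
    case isTrue hi =>
      have h1 : ts ⟨i, hi⟩ ∈ Mrec lhs rhs e m' (lhs (ts ⟨i, hi⟩).rootRule) := by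
        rw [mem_Mrec_lhs (hts ⟨i, hi⟩)]
        exact hts _
      exact Mrec_le_mono (by omega) _ (ih h1 h)
    case isFalse => exact absurd h (by simp)

lemma Mrec_cut : ∀ (m : ℕ) (A : N) (d : RT R fun r => (rhs r).length),
    d ∈ Mrec lhs rhs e m A → ∀ (p : List ℕ) (t : RT R fun r => (rhs r).length)
    (q : List ℕ) (s : RT R fun r => (rhs r).length),
    subAt d p = some t → subAt t q = some s → lhs s.rootRule = lhs t.rootRule →
    replaceAt d p s ∈ Mrec lhs rhs e m A := by
  intro m
  induction m using Nat.strong_induction_on with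
  | _ m IH =>
    intro A d hd p t q s hp hq hsort
    cases p with
    | nil =>
      rw [subAt_nil] at hp
      injection hp with hp; subst hp
      rw [replaceAt_nil]
      have h1 := Mrec_subAt hd hq
      rwa [hsort, mem_Mrec_lhs hd] at h1
    | cons i p' =>
      match m, hd with
      | 0, hd => rw [Mrec_zero] at hd; exact absurd hd (Set.notMem_empty d)
      | (m''+1), hd =>
        by_cases hsel : select e m'' = A
        · rw [Mrec_succ_pos hsel] at hd ⊢
          obtain ⟨r, hr, ts, rfl, hts⟩ := hd
          simp only [subAt] at hp
          split at hp
          next hi =>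
            refine ⟨r, hr, _, rfl, ?_⟩
            intro j
            by_cases hj : j.1 = i
            · have hj' : j = ⟨i, hi⟩ := Fin.ext hj
              subst hj'
              simp only [if_pos hj]
              exact IH m'' (by omega) _ _ (hts _) p' t q s hp hq hsort
            · simp only [if_neg hj]
              exact hts j
          next => exact absurd hp (by simp)
        · rw [Mrec_succ_neg hsel] at hd ⊢
          exact IH m'' (by omega) A d hd _ t q s hp hq hsort

end RTAux
namespace RTAux

open RT

variable {K : Type} [AddCommMonoid K] {N R : Type} [Fintype N] [Nonempty N] [Fintype R]
variable {lhs : R → N} {rhs : R → List N} {e : Fin (Fintype.card N) → N}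
variable {Ω : ∀ n : ℕ, Set ((Fin n → K) → K)}
variable {wt : ∀ r : R, (Fin (rhs r).length → K) → K}

lemma Vrec_zero (A : N) : Vrec lhs rhs wt e 0 A = 0 := by rw [Vrec]

lemma Vrec_succ_pos {n : ℕ} {A : N} (h : select e n = A) :
    Vrec lhs rhs wt e (n + 1) A
      = ∑ᶠ r ∈ {r : R | lhs r = A}, wt r fun i => Vrec lhs rhs wt e n ((rhs r).get i) := by
  rw [Vrec, if_pos h]

lemma Vrec_succ_neg {n : ℕ} {A : N} (h : ¬ select e n = A) :
    Vrec lhs rhs wt e (n + 1) A = Vrec lhs rhs wt e n A := by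
  rw [Vrec, if_neg h]

/-- Package a distributive operation as a `ℕ`-multilinear map. -/
noncomputable def mkML (hΩd : DistributiveOps Ω) (hwt : ∀ r : R, wt r ∈ Ω (rhs r).length)
    (r : R) : MultilinearMap ℕ (fun _ : Fin (rhs r).length => K) K where
  toFun := wt r
  map_update_add' := by
    intro inst m i x y
    have : inst = instDecidableEqFin _ := Subsingleton.elim _ _
    subst this
    exact (hΩd _ _ (hwt r)).1 m i x y
  map_update_smul' := by
    intro inst m i c x
    have : inst = instDecidableEqFin _ := Subsingleton.elim _ _
    subst this
    induction c with
    | zero =>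
      rw [zero_smul, zero_smul]
      exact (hΩd _ _ (hwt r)).2 _ ⟨i, Function.update_self _ _ _⟩
    | succ c ihc =>
      rw [succ_nsmul, (hΩd _ _ (hwt r)).1 m i (c • x) x, ihc, succ_nsmul]

lemma wt_map_sum (hΩd : DistributiveOps Ω) (hwt : ∀ r : R, wt r ∈ Ω (rhs r).length)
    (r : R) {α : Type} (T : Fin (rhs r).length → Finset α) (g : Fin (rhs r).length → α → K) :
    wt r (fun i => ∑ x ∈ T i, g i x)
      = ∑ ts ∈ Fintype.piFinset T, wt r (fun i => g i (ts i)) :=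
  (mkML hΩd hwt r).map_sum_finset g T

lemma Vsum (hΩd : DistributiveOps Ω) (hwt : ∀ r : R, wt r ∈ Ω (rhs r).length) :
    ∀ (m : ℕ) (A : N),
      Vrec lhs rhs wt e m A = ∑ᶠ d ∈ Mrec lhs rhs e m A, wtval wt d := by
  intro m
  induction m with
  | zero =>
    intro A
    rw [Vrec_zero, Mrec_zero, finsum_mem_empty]
  | succ m ih =>
    intro A
    by_cases hsel : select e m = A
    · rw [Vrec_succ_pos hsel, Mrec_succ_pos hsel]
      have hset : {r : R | lhs r = A} = ↑(Finset.univ.filter fun r => lhs r = A) := by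
        ext r; simp
      rw [hset, finsum_mem_coe_finset]
      have hterm : ∀ r : R,
          (wt r fun i => Vrec lhs rhs wt e m ((rhs r).get i))
            = ∑ ts ∈ Fintype.piFinset
                (fun i => (Mrec_finite (lhs := lhs) (e := e) m ((rhs r).get i)).toFinset),
                wtval wt (RT.node r ts) := by
        intro r
        have harg : (fun i => Vrec lhs rhs wt e m ((rhs r).get i))
            = fun i => ∑ x ∈ (Mrec_finite (lhs := lhs) (e := e) m ((rhs r).get i)).toFinset,
                wtval wt x := by
          funext i
          rw [ih ((rhs r).get i), ← finsum_mem_coe_finset, Set.Finite.coe_toFinset]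
        rw [harg, wt_map_sum hΩd hwt r]
        rfl
      rw [Finset.sum_congr rfl (fun r _ => hterm r),
        ← Finset.sum_sigma (f := fun x : Σ r : R,
            (Fin (rhs r).length → RT R fun r => (rhs r).length) =>
          wtval wt (RT.node x.1 x.2))]
      have hfin : ({d | ∃ (r : R) (_ : lhs r = A)
          (ts : Fin (rhs r).length → RT R fun r => (rhs r).length),
          d = RT.node r ts ∧ ∀ i, ts i ∈ Mrec lhs rhs e m ((rhs r).get i)} :
          Set (RT R fun r => (rhs r).length)).Finite := by
        rw [← Mrec_succ_pos hsel]
        exact Mrec_finite _ _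
      rw [← hfin.coe_toFinset, finsum_mem_coe_finset]
      have himg : hfin.toFinset = Finset.image
          (fun x : Σ r : R, (Fin (rhs r).length → RT R fun r => (rhs r).length) =>
            RT.node x.1 x.2)
          ((Finset.univ.filter fun r => lhs r = A).sigma
            fun r => Fintype.piFinset fun i => (Mrec_finite (lhs := lhs) (e := e) m ((rhs r).get i)).toFinset) := by
        ext d
        simp only [Set.Finite.mem_toFinset, Set.mem_setOf_eq, Finset.mem_image,
          Finset.mem_sigma, Finset.mem_filter, Finset.mem_univ, true_and,
          Fintype.mem_piFinset, Set.Finite.mem_toFinset]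
        constructor
        · rintro ⟨r, hr, ts, rfl, hts⟩
          exact ⟨⟨r, ts⟩, ⟨hr, hts⟩, rfl⟩
        · rintro ⟨⟨r, ts⟩, ⟨hr, hts⟩, rfl⟩
          exact ⟨r, hr, ts, rfl, hts⟩
      have hinj : ∀ x ∈ ((Finset.univ.filter fun r => lhs r = A).sigma
            fun r => Fintype.piFinset fun i =>
              (Mrec_finite (lhs := lhs) (e := e) m ((rhs r).get i)).toFinset),
          ∀ y ∈ ((Finset.univ.filter fun r => lhs r = A).sigma
            fun r => Fintype.piFinset fun i =>
              (Mrec_finite (lhs := lhs) (e := e) m ((rhs r).get i)).toFinset),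
          (fun x : Σ r : R, (Fin (rhs r).length → RT R fun r => (rhs r).length) =>
            (RT.node x.1 x.2 : RT R fun r => (rhs r).length)) x
          = (fun x : Σ r : R, (Fin (rhs r).length → RT R fun r => (rhs r).length) =>
            (RT.node x.1 x.2 : RT R fun r => (rhs r).length)) y → x = y := by
        rintro ⟨r, ts⟩ _ ⟨r', ts'⟩ _ hnode
        simp only at hnode
        rw [RT.node.injEq] at hnode
        obtain ⟨rfl, hts⟩ := hnode
        cases eq_of_heq hts
        rfl
      rw [himg, Finset.sum_image hinj]
    · rw [Vrec_succ_neg hsel, Mrec_succ_neg hsel]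
      exact ih A

end RTAux
namespace RTAux

open RT

variable {K : Type} [AddCommMonoid K] {N R : Type} [Fintype N] [Nonempty N] [Fintype R]
variable {lhs : R → N} {rhs : R → List N} {e : Fin (Fintype.card N) → N}
variable {Ω : ∀ n : ℕ, Set ((Fin n → K) → K)}
variable {wt : ∀ r : R, (Fin (rhs r).length → K) → K}

lemma Mrec_cutW_closed {m : ℕ} {A : N} {w : List R} (hew : ElementaryCycle w)
    {d d' : RT R fun r => (rhs r).length}
    (hd : d ∈ Mrec lhs rhs e m A) (hcut : CutW w d d') : d' ∈ Mrec lhs rhs e m A := by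
  obtain ⟨p, q, t, s, hp, hq, hseq, rfl⟩ := hcut
  obtain ⟨s', hs', hlast⟩ := seqTo_sub hseq
  rw [hq] at hs'
  injection hs' with hs'
  subst hs'
  have hhead := seqTo_head hseq
  have hrr : t.rootRule = s.rootRule := by
    have := hew.2.1
    rw [hhead, hlast] at this
    injection this
  exact Mrec_cut m A d hd p t q s hp hq (by rw [hrr])

lemma Mrec_cotreesW_closed {m : ℕ} {A : N} {w : List R} (hew : ElementaryCycle w)
    {d d' : RT R fun r => (rhs r).length}
    (hd : d ∈ Mrec lhs rhs e m A) (hcot : d' ∈ cotreesW w d) : d' ∈ Mrec lhs rhs e m A := by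
  induction hcot with
  | single h1 => exact Mrec_cutW_closed hew hd h1
  | tail _ h2 ih => exact Mrec_cutW_closed hew ih h2

lemma absorb_aux (hΩd : DistributiveOps Ω) (hwt : ∀ r : R, wt r ∈ Ω (rhs r).length)
    {c : ℕ} (hclosed : CClosed lhs rhs wt c)
    (S : Finset (RT R fun r => (rhs r).length))
    (hws : ∀ d ∈ S, WellSorted lhs rhs d)
    (hcut : ∀ d ∈ S, ∀ w : List R, ElementaryCycle w →
      ∀ d' ∈ cotreesW w d, d' ∈ S) :
    ∀ (n : ℕ) (B : Finset (RT R fun r => (rhs r).length)), B.card = n → B ⊆ S →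
      (∀ b ∈ B, b ∉ TRcset lhs rhs c) →
      (∀ x ∈ S, x ∉ TRcset lhs rhs c → x ∉ B → ∀ b ∈ B, tsize b ≤ tsize x) →
      ∑ d ∈ S.filter (· ∈ TRcset lhs rhs c) ∪ B, wtval wt d
        = ∑ d ∈ S.filter (· ∈ TRcset lhs rhs c), wtval wt d := by
  intro n
  induction n with
  | zero =>
    intro B hcard _ _ _
    rw [Finset.card_eq_zero.1 hcard, Finset.union_empty]
  | succ n ihn =>
    intro B hcard hBS hBbad hguard
    set G := S.filter (· ∈ TRcset lhs rhs c) with hG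
    have hBne : B.Nonempty := by
      rw [← Finset.card_pos, hcard]; omega
    obtain ⟨d, hdB, hdmax⟩ := Finset.exists_max_image B tsize hBne
    have hdS : d ∈ S := hBS hdB
    have hws_d : WellSorted lhs rhs d := hws d hdS
    have hbad : d ∉ TRcset lhs rhs c := hBbad d hdB
    obtain ⟨p₀, d₀, w, p₁, hsub0, hew, hleafcw⟩ := exists_cyclic_subtree hws_d hbad
    have hws0 : WellSorted lhs rhs d₀ := wellSorted_subAt hws_d hsub0
    have heq := hclosed d₀ hws0 w hew ⟨p₁, hleafcw⟩
    have hfin : (cotreesW w d₀).Finite := finite_cotreesW hew.1 d₀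
    rw [← hfin.coe_toFinset, finsum_mem_coe_finset] at heq
    have heq2 := congrArg (wtRepl wt d p₀) heq
    rw [wtRepl_add hΩd hwt hsub0, wtRepl_sum hΩd hwt hsub0] at heq2
    simp only [wtRepl_replace wt hsub0] at heq2
    rw [replaceAt_self hsub0] at heq2
    -- heq2 : wtval d + ∑ x ∈ F, wtval (replaceAt d p₀ x) = ∑ x ∈ F, wtval (replaceAt d p₀ x)
    set T := hfin.toFinset.image (replaceAt d p₀) with hT
    have hinjT : ∀ x ∈ hfin.toFinset, ∀ y ∈ hfin.toFinset,
        replaceAt d p₀ x = replaceAt d p₀ y → x = y := by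
      intro x _ y _ hxy
      have h1 := subAt_replaceAt_self hsub0 x
      rw [hxy] at h1
      have h2 := subAt_replaceAt_self hsub0 y
      rw [h1] at h2
      injection h2
    have hsumT : ∑ y ∈ T, wtval wt y = ∑ x ∈ hfin.toFinset, wtval wt (replaceAt d p₀ x) :=
      Finset.sum_image hinjT
    have heq4 : wtval wt d + ∑ y ∈ T, wtval wt y = ∑ y ∈ T, wtval wt y := by
      rw [hsumT]; exact heq2
    have hTprops : ∀ y ∈ T, y ∈ S ∧ tsize y < tsize d := by
      intro y hyT
      rw [hT, Finset.mem_image] at hyT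
      obtain ⟨x, hx, rfl⟩ := hyT
      rw [Set.Finite.mem_toFinset] at hx
      have hcot : replaceAt d p₀ x ∈ cotreesW w d := cotreesW_lift hsub0 hx
      exact ⟨hcut d hdS w hew _ hcot, cotreesW_tsize hew.1 hcot⟩
    have hTGB : T ⊆ G ∪ B.erase d := by
      intro y hyT
      obtain ⟨hyS, hylt⟩ := hTprops y hyT
      by_cases hyc : y ∈ TRcset lhs rhs c
      · exact Finset.mem_union_left _ (Finset.mem_filter.2 ⟨hyS, hyc⟩)
      · have hyB : y ∈ B := by
          by_contra hnB
          have := hguard y hyS hyc hnB d hdB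
          omega
        refine Finset.mem_union_right _ (Finset.mem_erase.2 ⟨?_, hyB⟩)
        intro hyd
        rw [hyd] at hylt
        omega
    have hdG : d ∉ G := by
      rw [hG, Finset.mem_filter]
      rintro ⟨-, hc⟩
      exact hbad hc
    have hGB : G ∪ B = insert d (G ∪ B.erase d) := by
      ext x
      simp only [Finset.mem_union, Finset.mem_insert, Finset.mem_erase]
      constructor
      · rintro (hx | hx)
        · exact Or.inr (Or.inl hx)
        · by_cases hxd : x = d
          · exact Or.inl hxd
          · exact Or.inr (Or.inr ⟨hxd, hx⟩)
      · rintro (rfl | hx | ⟨-, hx⟩)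
        · exact Or.inr hdB
        · exact Or.inl hx
        · exact Or.inr hx
    have hdnot : d ∉ G ∪ B.erase d := by
      rw [Finset.mem_union]
      rintro (h | h)
      · exact hdG h
      · exact (Finset.mem_erase.1 h).1 rfl
    rw [hGB, Finset.sum_insert hdnot, ← Finset.sum_sdiff hTGB, add_left_comm, heq4,
      Finset.sum_sdiff hTGB]
    exact ihn (B.erase d) (by rw [Finset.card_erase_of_mem hdB, hcard]; omega) 
      ((Finset.erase_subset _ _).trans hBS)
      (fun b hb => hBbad b (Finset.mem_of_mem_erase hb))
      (by
        intro x hxS hxc hxB b hb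
        by_cases hxd : x = d
        · subst hxd
          exact hdmax b (Finset.mem_of_mem_erase hb)
        · have hxB' : x ∉ B := by
            intro hxB2
            exact hxB (Finset.mem_erase.2 ⟨hxd, hxB2⟩)
          exact hguard x hxS hxc hxB' b (Finset.mem_of_mem_erase hb))

lemma sum_restrict (hΩd : DistributiveOps Ω) (hwt : ∀ r : R, wt r ∈ Ω (rhs r).length)
    {c : ℕ} (hclosed : CClosed lhs rhs wt c)
    (S : Finset (RT R fun r => (rhs r).length))
    (hws : ∀ d ∈ S, WellSorted lhs rhs d)
    (hcut : ∀ d ∈ S, ∀ w : List R, ElementaryCycle w → ∀ d' ∈ cotreesW w d, d' ∈ S) :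
    ∑ d ∈ S, wtval wt d = ∑ d ∈ S.filter (· ∈ TRcset lhs rhs c), wtval wt d := by
  have h := absorb_aux hΩd hwt hclosed S hws hcut
    (S.filter (· ∉ TRcset lhs rhs c)).card (S.filter (· ∉ TRcset lhs rhs c)) rfl
    (Finset.filter_subset _ _)
    (fun b hb => (Finset.mem_filter.1 hb).2)
    (fun x hxS hxc hxB b hb => absurd (Finset.mem_filter.2 ⟨hxS, hxc⟩) hxB)
  rw [Finset.filter_union_filter_not_eq (· ∈ TRcset lhs rhs c) S] at h
  exact h

end RTAux
/-- In a `c`-closed weighted system, whenever the value of a nonterminal changes in an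
iteration of the value computation algorithm, its set of at most `c`-cyclic derivation
trees grows properly. -/
theorem Mrec_grows_on_change {N R K : Type} [Fintype N] [Nonempty N] [Fintype R]
    [AddCommMonoid K]
    (S : InfSum K) (hdc : S.DComplete)
    (Ω : ∀ n : ℕ, Set ((Fin n → K) → K)) (hΩ0 : HasZeroOps Ω) (hΩd : DistributiveOps Ω)
    (lhs : R → N) (rhs : R → List N)
    (wt : ∀ r : R, (Fin (rhs r).length → K) → K) (hwt : ∀ r : R, wt r ∈ Ω (rhs r).length)
    (c : ℕ) (hclosed : CClosed lhs rhs wt c)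
    (e : Fin (Fintype.card N) → N) (he : Function.Bijective e) :
    ∀ (n : ℕ) (A : N),
      Vrec lhs rhs wt e (n + 1) A ≠ Vrec lhs rhs wt e n A →
        (Mrec lhs rhs e n A ∩ TRcset lhs rhs c) ⊂ (Mrec lhs rhs e (n + 1) A ∩ TRcset lhs rhs c) := by
  intro n A hne
  refine HasSubset.Subset.ssubset_of_ne
    (Set.inter_subset_inter_left _ (RTAux.Mrec_mono n A)) ?_
  intro hEq
  apply hne
  have key : ∀ m, Vrec lhs rhs wt e m A
      = ∑ᶠ d ∈ (Mrec lhs rhs e m A ∩ TRcset lhs rhs c), wtval wt d := by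
    intro m
    have hfin := RTAux.Mrec_finite (lhs := lhs) (rhs := rhs) (e := e) m A
    have hws : ∀ d ∈ hfin.toFinset, WellSorted lhs rhs d := fun d hd =>
      RTAux.Mrec_wellSorted (hfin.mem_toFinset.1 hd)
    have hcut : ∀ d ∈ hfin.toFinset, ∀ w : List R, ElementaryCycle w →
        ∀ d' ∈ cotreesW w d, d' ∈ hfin.toFinset := fun d hd w hew d' hd' =>
      hfin.mem_toFinset.2 (RTAux.Mrec_cotreesW_closed hew (hfin.mem_toFinset.1 hd) hd')
    have hfin2 : (Mrec lhs rhs e m A ∩ TRcset lhs rhs c).Finite :=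
      hfin.subset Set.inter_subset_left
    rw [RTAux.Vsum hΩd hwt m A,
      finsum_mem_eq_finite_toFinset_sum (wtval wt) hfin,
      RTAux.sum_restrict hΩd hwt hclosed _ hws hcut,
      finsum_mem_eq_finite_toFinset_sum (wtval wt) hfin2]
    congr 1
    ext d
    simp [Set.Finite.mem_toFinset]
  rw [key (n + 1), key n, hEq]
end
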